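/- arXiv:2108.11214 — 5 statements merged into one kernel-verified Lean document; each statement's English description precedes it below -/
import Mathlib

section
/- Let σ ⊆ ℝ^n be a polyhedral cone whose polar cone is σ∨ = Cone(u_1,…,u_r). Then the map ι : N_ℝ(σ) → (ℝ ∪ {−∞})^r defined by ι(φ) = (φ(u_1),…,φ(u_r)) is injective, continuous, its image is a closed subset of (ℝ ∪ {−∞})^r, and ι is a homeomorphism onto its image. -/
open Topology

noncomputable section

/-- The standard pairing `⟨u, v⟩ = ∑ i, u i * v i` on `ℝⁿ`. -/
def dotp {n : ℕ} (u v : Fin n → ℝ) : ℝ := ∑ i, u i * v i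

/-- The polyhedral cone generated by the vectors `v 0, …, v (s-1)`. -/
def coneOf {n s : ℕ} (v : Fin s → (Fin n → ℝ)) : Set (Fin n → ℝ) :=
  {x | ∃ lam : Fin s → ℝ, (∀ j, 0 ≤ lam j) ∧ x = ∑ j, lam j • v j}

/-- A set is a polyhedral cone if it is finitely generated. -/
def IsPolyCone {n : ℕ} (σ : Set (Fin n → ℝ)) : Prop :=
  ∃ (s : ℕ) (v : Fin s → (Fin n → ℝ)), σ = coneOf v

/-- The polar cone `σ∨ = {u | ⟨u,v⟩ ≤ 0 ∀ v ∈ σ}`. -/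
def polarCone {n : ℕ} (σ : Set (Fin n → ℝ)) : Set (Fin n → ℝ) :=
  {u | ∀ v ∈ σ, dotp u v ≤ 0}

/-- A cone is pointed if it contains no nonzero linear subspace. -/
def IsPointed {n : ℕ} (σ : Set (Fin n → ℝ)) : Prop :=
  ∀ W : Submodule ℝ (Fin n → ℝ), (W : Set (Fin n → ℝ)) ⊆ σ → W = ⊥

/-- The partial compactification `N_ℝ(σ)`: the set of `ℝ₊`-equivariant monoid morphisms
`φ : σ∨ → ℝ ∪ {-∞}`, realized as `EReal`-valued functions on `σ∨` never taking the
value `+∞`.  (In `EReal` one has `(0 : EReal) * ⊥ = 0`, which is the convention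
`0 · (-∞) = 0`.)  It is topologized as a subspace of the product
`σ∨ → EReal`, i.e. with the topology of pointwise convergence. -/
def NRc {n : ℕ} (σ : Set (Fin n → ℝ)) : Set (↥(polarCone σ) → EReal) :=
  {φ | (∀ u, φ u ≠ ⊤) ∧
    (∀ (u u' : ↥(polarCone σ)) (h : (u : Fin n → ℝ) + (u' : Fin n → ℝ) ∈ polarCone σ),
      φ ⟨(u : Fin n → ℝ) + (u' : Fin n → ℝ), h⟩ = φ u + φ u') ∧
    (∀ (c : ℝ), 0 ≤ c → ∀ (u : ↥(polarCone σ)) (h : c • (u : Fin n → ℝ) ∈ polarCone σ),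
      φ ⟨c • (u : Fin n → ℝ), h⟩ = (c : EReal) * φ u)}

/-- The canonical map `N_ℝ → (σ∨ → EReal)`, `v ↦ (u ↦ ⟨u,v⟩)`; its image lies in `N_ℝ(σ)`. -/
def jmap {n : ℕ} (σ : Set (Fin n → ℝ)) (v : Fin n → ℝ) : ↥(polarCone σ) → EReal :=
  fun u => ((dotp (u : Fin n → ℝ) v : ℝ) : EReal)


/-- `ℝ ∪ {-∞}`, realized as the subspace of `EReal` of points different from `+∞`. -/
def RInf : Type := {x : EReal // x ≠ ⊤}

instance : TopologicalSpace RInf := instTopologicalSpaceSubtype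

/-- The map `ι : N_ℝ(σ) → (ℝ ∪ {-∞})^r`, `φ ↦ (φ(u_1), …, φ(u_r))`, for generators
`u_1, …, u_r` of `σ∨`. -/
def iotaGen {n r : ℕ} (σ : Set (Fin n → ℝ)) (u : Fin r → (Fin n → ℝ))
    (hu : ∀ i, u i ∈ polarCone σ) (φ : ↥(NRc σ)) : Fin r → RInf :=
  fun i => ⟨φ.1 ⟨u i, hu i⟩, φ.2.1 ⟨u i, hu i⟩⟩

section Aux

lemma dotp_add' {n : ℕ} (a b v : Fin n → ℝ) : dotp (a + b) v = dotp a v + dotp b v := by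
  simp [dotp, add_mul, Finset.sum_add_distrib]

lemma dotp_smul' {n : ℕ} (c : ℝ) (a v : Fin n → ℝ) : dotp (c • a) v = c * dotp a v := by
  simp [dotp, Finset.mul_sum, mul_assoc]

lemma pc_zero {n : ℕ} (σ : Set (Fin n → ℝ)) : (0 : Fin n → ℝ) ∈ polarCone σ := by
  intro v hv; simp [dotp]

lemma pc_add {n : ℕ} {σ : Set (Fin n → ℝ)} {a b : Fin n → ℝ}
    (ha : a ∈ polarCone σ) (hb : b ∈ polarCone σ) : a + b ∈ polarCone σ := by
  intro v hv; rw [dotp_add']; exact add_nonpos (ha v hv) (hb v hv)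

lemma pc_smul {n : ℕ} {σ : Set (Fin n → ℝ)} {c : ℝ} (hc : 0 ≤ c) {a : Fin n → ℝ}
    (ha : a ∈ polarCone σ) : c • a ∈ polarCone σ := by
  intro v hv; rw [dotp_smul']; exact mul_nonpos_iff.2 (Or.inl ⟨hc, ha v hv⟩)

lemma pc_sum {n : ℕ} {σ : Set (Fin n → ℝ)} {ι : Type*} (s : Finset ι)
    (w : ι → Fin n → ℝ) (hw : ∀ j ∈ s, w j ∈ polarCone σ) :
    ∑ j ∈ s, w j ∈ polarCone σ := by
  classical
  induction s using Finset.induction with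
  | empty => simpa using pc_zero σ
  | @insert a s ha ih =>
    rw [Finset.sum_insert ha]
    exact pc_add (hw a (Finset.mem_insert_self a s))
      (ih fun j hj => hw j (Finset.mem_insert_of_mem hj))

lemma ereal_mul_ne_top {c : ℝ} (hc : 0 ≤ c) {x : EReal} (hx : x ≠ ⊤) :
    (c : EReal) * x ≠ ⊤ := by
  induction x with
  | bot =>
    rcases hc.eq_or_lt with rfl | hc
    · simp [EReal.zero_mul]
    · rw [EReal.coe_mul_bot_of_pos hc]; simp
  | coe y => rw [← EReal.coe_mul]; exact EReal.coe_ne_top _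
  | top => exact absurd rfl hx

lemma ereal_sum_ne_top {ι : Type*} (s : Finset ι) (f : ι → EReal)
    (hf : ∀ i ∈ s, f i ≠ ⊤) : ∑ i ∈ s, f i ≠ ⊤ := by
  classical
  induction s using Finset.induction with
  | empty => simp
  | @insert a s ha ih =>
    rw [Finset.sum_insert ha]
    exact (EReal.add_lt_top (lt_top_iff_ne_top.2 (hf a (Finset.mem_insert_self a s))).ne
      (ih fun i hi => hf i (Finset.mem_insert_of_mem hi))).ne

lemma ereal_left_distrib {c : ℝ} (hc : 0 ≤ c) {x y : EReal} (hx : x ≠ ⊤) (hy : y ≠ ⊤) :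
    (c : EReal) * (x + y) = (c : EReal) * x + (c : EReal) * y := by
  rcases hc.eq_or_lt with rfl | hc
  · simp [EReal.zero_mul]
  induction x with
  | top => exact absurd rfl hx
  | bot =>
    rw [EReal.bot_add, EReal.coe_mul_bot_of_pos hc, EReal.bot_add]
  | coe a =>
    induction y with
    | top => exact absurd rfl hy
    | bot =>
      rw [EReal.add_bot, EReal.coe_mul_bot_of_pos hc, EReal.add_bot]
    | coe b =>
      rw [← EReal.coe_add, ← EReal.coe_mul, ← EReal.coe_mul, ← EReal.coe_mul, ← EReal.coe_add,
        mul_add]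

lemma ereal_mul_sum {ι : Type*} (s : Finset ι) {c : ℝ} (hc : 0 ≤ c) (f : ι → EReal)
    (hf : ∀ i ∈ s, f i ≠ ⊤) :
    (c : EReal) * ∑ i ∈ s, f i = ∑ i ∈ s, (c : EReal) * f i := by
  classical
  induction s using Finset.induction with
  | empty => simp
  | @insert a s ha ih =>
    rw [Finset.sum_insert ha, Finset.sum_insert ha,
      ereal_left_distrib hc (hf a (Finset.mem_insert_self a s))
        (ereal_sum_ne_top s f fun i hi => hf i (Finset.mem_insert_of_mem hi)),
      ih fun i hi => hf i (Finset.mem_insert_of_mem hi)]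

lemma ereal_cont_add {X : Type*} [TopologicalSpace X] {f g : X → EReal}
    (hf : Continuous f) (hg : Continuous g) (hf' : ∀ x, f x ≠ ⊤) (hg' : ∀ x, g x ≠ ⊤) :
    Continuous fun x => f x + g x := by
  rw [continuous_iff_continuousAt]
  intro x
  exact (EReal.continuousAt_add (Or.inl (hf' x)) (Or.inr (hg' x))).comp
    ((hf.prodMk hg).continuousAt)

lemma ereal_cont_const_mul (c : ℝ) : Continuous fun x : EReal => (c : EReal) * x := by
  rcases eq_or_ne c 0 with rfl | hc
  · simp only [EReal.coe_zero, EReal.zero_mul]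
    exact continuous_const
  · rw [continuous_iff_continuousAt]
    intro x
    exact (EReal.continuousAt_mul (Or.inl (EReal.coe_ne_zero.2 hc))
      (Or.inl (EReal.coe_ne_zero.2 hc)) (Or.inl (EReal.coe_ne_bot c))
      (Or.inl (EReal.coe_ne_top c))).comp ((continuous_const.prodMk continuous_id).continuousAt)

lemma ereal_cont_sum {X : Type*} [TopologicalSpace X] {ι : Type*} (s : Finset ι)
    (f : ι → X → EReal) (hc : ∀ i, Continuous (f i)) (ht : ∀ i x, f i x ≠ ⊤) :
    Continuous (fun x => ∑ i ∈ s, f i x) := by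
  classical
  induction s using Finset.induction with
  | empty => simpa using continuous_const
  | @insert a s ha ih =>
    simp only [Finset.sum_insert ha]
    exact ereal_cont_add (hc a) ih (ht a)
      (fun x => ereal_sum_ne_top s (fun i => f i x) fun i _ => ht i x)

/-- Key computation: an element of `NRc σ` is additive on finite sums. -/
lemma phi_sum {n : ℕ} {σ : Set (Fin n → ℝ)} {φ : ↥(polarCone σ) → EReal} (hφ : φ ∈ NRc σ)
    {k : ℕ} (w : Fin k → Fin n → ℝ) (hw : ∀ j, w j ∈ polarCone σ)
    (h : ∑ j, w j ∈ polarCone σ) :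
    φ ⟨∑ j, w j, h⟩ = ∑ j, φ ⟨w j, hw j⟩ := by
  induction k with
  | zero =>
    have h0 : (0 : Fin n → ℝ) ∈ polarCone σ := pc_zero σ
    have e1 : (⟨∑ j, w j, h⟩ : ↥(polarCone σ)) = ⟨(0:ℝ) • (0 : Fin n → ℝ),
        pc_smul le_rfl h0⟩ := Subtype.ext (by simp)
    rw [e1, hφ.2.2 0 le_rfl ⟨0, h0⟩ (pc_smul le_rfl h0)]
    simp [EReal.zero_mul]
  | succ k ih =>
    have hw' : ∀ j : Fin k, w j.castSucc ∈ polarCone σ := fun j => hw _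
    have hsum : ∑ j : Fin k, w j.castSucc ∈ polarCone σ :=
      pc_sum Finset.univ _ fun j _ => hw' j
    have hmem : (∑ j : Fin k, w j.castSucc) + w (Fin.last k) ∈ polarCone σ :=
      pc_add hsum (hw _)
    have e1 : (⟨∑ j, w j, h⟩ : ↥(polarCone σ)) =
        ⟨(∑ j : Fin k, w j.castSucc) + w (Fin.last k), hmem⟩ :=
      Subtype.ext (Fin.sum_univ_castSucc w)
    rw [e1, hφ.2.1 ⟨∑ j : Fin k, w j.castSucc, hsum⟩ ⟨w (Fin.last k), hw _⟩ hmem,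
      ih _ hw' hsum, Fin.sum_univ_castSucc]

/-- Key computation: an element of `NRc σ` sends a nonnegative combination to the
corresponding `EReal` combination. -/
lemma phi_comb {n k : ℕ} {σ : Set (Fin n → ℝ)} {φ : ↥(polarCone σ) → EReal} (hφ : φ ∈ NRc σ)
    (lam : Fin k → ℝ) (hlam : ∀ i, 0 ≤ lam i)
    (v : Fin k → Fin n → ℝ) (hv : ∀ i, v i ∈ polarCone σ)
    (h : ∑ i, lam i • v i ∈ polarCone σ) :
    φ ⟨∑ i, lam i • v i, h⟩ = ∑ i, (lam i : EReal) * φ ⟨v i, hv i⟩ := by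
  rw [phi_sum hφ _ (fun i => pc_smul (hlam i) (hv i)) h]
  exact Finset.sum_congr rfl fun i _ => hφ.2.2 (lam i) (hlam i) ⟨v i, hv i⟩ _

end Aux

/-- If `σ ⊆ ℝⁿ` is a polyhedral cone with polar cone
`σ∨ = Cone(u_1, …, u_r)`, then `ι : N_ℝ(σ) → (ℝ ∪ {-∞})^r`, `φ ↦ (φ(u_i))_i`, is
injective, continuous, has closed image, and is a homeomorphism onto its image. -/
theorem stmt0 {n r : ℕ} (σ : Set (Fin n → ℝ)) (hσ : IsPolyCone σ)
    (u : Fin r → (Fin n → ℝ)) (hpol : polarCone σ = coneOf u)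
    (hu : ∀ i, u i ∈ polarCone σ) :
    Function.Injective (iotaGen σ u hu) ∧ Continuous (iotaGen σ u hu) ∧
      IsClosed (Set.range (iotaGen σ u hu)) ∧ IsEmbedding (iotaGen σ u hu) := by
  classical
  -- choose a representation of every element of the polar cone
  have hrep : ∀ w : ↥(polarCone σ), ∃ lam : Fin r → ℝ,
      (∀ j, 0 ≤ lam j) ∧ (w : Fin n → ℝ) = ∑ j, lam j • u j := by
    intro w
    exact hpol.le w.2
  choose lam hlam0 hlamr using hrep
  -- key evaluation formula
  have key : ∀ (φ : ↥(NRc σ)) (w : ↥(polarCone σ)),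
      φ.1 w = ∑ i, (lam w i : EReal) * φ.1 ⟨u i, hu i⟩ := by
    intro φ w
    have hmem : ∑ i, lam w i • u i ∈ polarCone σ := by
      rw [← hlamr w]; exact w.2
    have e1 : w = (⟨∑ i, lam w i • u i, hmem⟩ : ↥(polarCone σ)) :=
      Subtype.ext (hlamr w)
    conv_lhs => rw [e1]
    exact phi_comb φ.2 (lam w) (hlam0 w) u hu hmem
  -- injectivity
  have hinj : Function.Injective (iotaGen σ u hu) := by
    intro φ ψ h
    apply Subtype.ext
    funext w
    rw [key φ w, key ψ w]
    refine Finset.sum_congr rfl fun i _ => ?_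
    have h1 : φ.1 ⟨u i, hu i⟩ = ψ.1 ⟨u i, hu i⟩ := congrArg Subtype.val (congrFun h i)
    rw [h1]
  -- continuity
  have hcont : Continuous (iotaGen σ u hu) := by
    apply continuous_pi
    intro i
    exact Continuous.subtype_mk
      ((continuous_apply (⟨u i, hu i⟩ : ↥(polarCone σ))).comp continuous_subtype_val) _
  -- the continuous "inverse" map
  set g : (Fin r → RInf) → (↥(polarCone σ) → EReal) :=
    fun y w => ∑ i, (lam w i : EReal) * (y i).1 with hg_def
  have hgcont : Continuous g := by
    apply continuous_pi
    intro w
    exact ereal_cont_sum Finset.univ _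
      (fun i => (ereal_cont_const_mul (lam w i)).comp
        (continuous_subtype_val.comp (continuous_apply i)))
      (fun i y => ereal_mul_ne_top (hlam0 w i) (y i).2)
  have hgι : ∀ φ : ↥(NRc σ), g (iotaGen σ u hu φ) = φ.1 := by
    intro φ
    funext w
    exact (key φ w).symm
  -- embedding
  have hemb : IsEmbedding (iotaGen σ u hu) := by
    refine ⟨?_, hinj⟩
    have hval : IsInducing (Subtype.val : ↥(NRc σ) → (↥(polarCone σ) → EReal)) :=
      Topology.IsInducing.subtypeVal
    have hcomp : g ∘ (iotaGen σ u hu) = Subtype.val := funext hgι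
    exact Topology.IsInducing.of_comp hcont hgcont (hcomp ▸ hval)
  -- closed range: characterize the image
  set S : Set (Fin r → RInf) :=
    {y | ∀ a b : Fin r → ℝ, (∀ i, 0 ≤ a i) → (∀ i, 0 ≤ b i) →
      (∑ i, a i • u i = ∑ i, b i • u i) →
      ∑ i, (a i : EReal) * (y i).1 = ∑ i, (b i : EReal) * (y i).1} with hS_def
  have hrange : Set.range (iotaGen σ u hu) = S := by
    ext y
    constructor
    · rintro ⟨φ, rfl⟩
      intro a b ha hb hab
      have hmema : ∑ i, a i • u i ∈ polarCone σ :=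
        pc_sum Finset.univ _ fun i _ => pc_smul (ha i) (hu i)
      have hmemb : ∑ i, b i • u i ∈ polarCone σ := by rw [← hab]; exact hmema
      have e1 : (⟨∑ i, a i • u i, hmema⟩ : ↥(polarCone σ)) = ⟨∑ i, b i • u i, hmemb⟩ :=
        Subtype.ext hab
      have h2 := phi_comb φ.2 a ha u hu hmema
      have h3 := phi_comb φ.2 b hb u hu hmemb
      show ∑ i, (a i : EReal) * φ.1 ⟨u i, hu i⟩ = ∑ i, (b i : EReal) * φ.1 ⟨u i, hu i⟩
      rw [← h2, ← h3]
      exact congrArg φ.1 e1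
    · intro hy
      -- construct the preimage
      have hψmem : g y ∈ NRc σ := by
        refine ⟨fun w => ereal_sum_ne_top _ _ fun i _ =>
          ereal_mul_ne_top (hlam0 w i) (y i).2, ?_, ?_⟩
        · intro w w' hww'
          have h1 : ∑ i, lam ⟨(w : Fin n → ℝ) + w', hww'⟩ i • u i
              = ∑ i, (lam w i + lam w' i) • u i := by
            rw [← hlamr ⟨(w : Fin n → ℝ) + w', hww'⟩]
            simp only [add_smul, Finset.sum_add_distrib]
            rw [← hlamr w, ← hlamr w']
          have h2 := hy _ _ (hlam0 _) (fun i => add_nonneg (hlam0 w i) (hlam0 w' i)) h1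
          show ∑ i, (lam ⟨(w : Fin n → ℝ) + w', hww'⟩ i : EReal) * (y i).1 = _
          rw [h2]
          have h3 : ∀ i : Fin r, ((lam w i + lam w' i : ℝ) : EReal) * (y i).1
              = (lam w i : EReal) * (y i).1 + (lam w' i : EReal) * (y i).1 := by
            intro i
            rw [EReal.coe_add]
            exact EReal.right_distrib_of_nonneg (EReal.coe_nonneg.2 (hlam0 w i))
              (EReal.coe_nonneg.2 (hlam0 w' i))
          rw [Finset.sum_congr rfl fun i _ => h3 i, Finset.sum_add_distrib]
        · intro c hc w hcw
          have h1 : ∑ i, lam ⟨c • (w : Fin n → ℝ), hcw⟩ i • u i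
              = ∑ i, (c * lam w i) • u i := by
            rw [← hlamr ⟨c • (w : Fin n → ℝ), hcw⟩]
            simp only [mul_smul, ← Finset.smul_sum]
            rw [← hlamr w]
          have h2 := hy _ _ (hlam0 _) (fun i => mul_nonneg hc (hlam0 w i)) h1
          show ∑ i, (lam ⟨c • (w : Fin n → ℝ), hcw⟩ i : EReal) * (y i).1 = _
          rw [h2]
          have h3 : ∀ i : Fin r, ((c * lam w i : ℝ) : EReal) * (y i).1
              = (c : EReal) * ((lam w i : EReal) * (y i).1) := by
            intro i
            rw [EReal.coe_mul, mul_assoc]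
          rw [Finset.sum_congr rfl fun i _ => h3 i,
            ← ereal_mul_sum Finset.univ hc _ fun i _ => ereal_mul_ne_top (hlam0 w i) (y i).2]
      refine ⟨⟨g y, hψmem⟩, ?_⟩
      funext i
      apply Subtype.ext
      show g y ⟨u i, hu i⟩ = (y i).1
      have hδ : ∑ j, (if j = i then (1:ℝ) else 0) • u j = u i := by
        simp [ite_smul]
      have h1 : ∑ j, lam ⟨u i, hu i⟩ j • u j = ∑ j, (if j = i then (1:ℝ) else 0) • u j := by
        rw [← hlamr ⟨u i, hu i⟩, hδ]
      have h2 := hy _ _ (hlam0 _) (fun j => by positivity) h1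
      show ∑ j, (lam ⟨u i, hu i⟩ j : EReal) * (y j).1 = (y i).1
      rw [h2]
      have h3 : ∀ j : Fin r, ((if j = i then (1:ℝ) else 0 : ℝ) : EReal) * (y j).1
          = if j = i then (y j).1 else 0 := by
        intro j
        split <;> simp [EReal.zero_mul]
      rw [Finset.sum_congr rfl fun j _ => h3 j, Finset.sum_ite_eq' Finset.univ i]
      simp
  -- closedness of S
  have hSclosed : IsClosed S := by
    have hrw : S = ⋂ (a : Fin r → ℝ) (b : Fin r → ℝ) (_ : ∀ i, 0 ≤ a i) (_ : ∀ i, 0 ≤ b i)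
        (_ : ∑ i, a i • u i = ∑ i, b i • u i),
        {y : Fin r → RInf | ∑ i, (a i : EReal) * (y i).1 = ∑ i, (b i : EReal) * (y i).1} := by
      ext y
      simp only [hS_def, Set.mem_setOf_eq, Set.mem_iInter]
    rw [hrw]
    refine isClosed_iInter fun a => isClosed_iInter fun b => isClosed_iInter fun ha =>
      isClosed_iInter fun hb => isClosed_iInter fun _ => ?_
    have hca : Continuous fun y : Fin r → RInf => ∑ i, (a i : EReal) * (y i).1 :=
      ereal_cont_sum Finset.univ _
        (fun i => (ereal_cont_const_mul (a i)).comp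
          (continuous_subtype_val.comp (continuous_apply i)))
        (fun i y => ereal_mul_ne_top (ha i) (y i).2)
    have hcb : Continuous fun y : Fin r → RInf => ∑ i, (b i : EReal) * (y i).1 :=
      ereal_cont_sum Finset.univ _
        (fun i => (ereal_cont_const_mul (b i)).comp
          (continuous_subtype_val.comp (continuous_apply i)))
        (fun i y => ereal_mul_ne_top (hb i) (y i).2)
    exact isClosed_eq hca hcb
  exact ⟨hinj, hcont, hrange ▸ hSclosed, hemb⟩

end
end

section
/- Let σ ⊆ ℝ^n be a pointed polyhedral cone. Then the canonical map j : N_ℝ → N_ℝ(σ) sending v to the function u ↦ ⟨u,v⟩ is injective, continuous, and a homeomorphism onto its image (a topological embedding). -/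
open Topology

noncomputable section

namespace AuxStmt

/-- the linear combination map -/
def combo {n : ℕ} {ι : Type} [Fintype ι] (w : ι → (Fin n → ℝ)) :
    (ι → ℝ) →ₗ[ℝ] (Fin n → ℝ) where
  toFun f := ∑ j, f j • w j
  map_add' a b := by simp [add_smul, Finset.sum_add_distrib]
  map_smul' c a := by simp [smul_smul, Finset.smul_sum]

open Finset in
/-- conic Carathéodory -/
lemma carath {n : ℕ} {ι : Type} [Fintype ι] [DecidableEq ι] (v : ι → (Fin n → ℝ)) :
    ∀ (N : ℕ) (lam : ι → ℝ), (univ.filter fun j => lam j ≠ 0).card ≤ N → (∀ j, 0 ≤ lam j) →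
    ∃ mu : ι → ℝ, (∀ j, 0 ≤ mu j) ∧ ∑ j, mu j • v j = ∑ j, lam j • v j ∧
      LinearIndependent ℝ (fun j : (univ.filter fun j => mu j ≠ 0 : Finset ι) => v j) := by
  intro N
  induction N with
  | zero =>
    intro lam hcard hpos
    have hemp : (univ.filter fun j => lam j ≠ 0) = ∅ := Finset.card_eq_zero.mp
      (Nat.le_zero.mp hcard)
    haveI : IsEmpty {x // x ∈ univ.filter fun j => lam j ≠ 0} :=
      ⟨fun x => Finset.eq_empty_iff_forall_notMem.mp hemp _ x.2⟩
    exact ⟨lam, hpos, rfl, linearIndependent_empty_type⟩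
  | succ N ih =>
    intro lam hcard hpos
    by_cases hli : LinearIndependent ℝ
        (fun j : (univ.filter fun j => lam j ≠ 0 : Finset ι) => v j)
    · exact ⟨lam, hpos, rfl, hli⟩
    set T : Finset ι := univ.filter fun j => lam j ≠ 0 with hT
    obtain ⟨g, hg0, i0, hgi0⟩ := Fintype.not_linearIndependent_iff.mp hli
    -- extend g to ι, possibly negated so that it has a positive value
    have hext : ∃ h : ι → ℝ, (∀ j, h j ≠ 0 → j ∈ T) ∧ (∑ j, h j • v j = 0) ∧ ∃ j, 0 < h j := by
      set g' : ι → ℝ := fun j => if hj : j ∈ T then g ⟨j, hj⟩ else 0 with hg'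
      have hsupp : ∀ j, g' j ≠ 0 → j ∈ T := by
        intro j hj
        by_contra hjT
        simp [hg', hjT] at hj
      have hsum : ∑ j, g' j • v j = 0 := by
        rw [← Finset.sum_subset (Finset.subset_univ T)
          (by intro j _ hj; rw [hg']; simp [hj])]
        rw [← Finset.sum_coe_sort T (fun j => g' j • v j)]
        rw [← hg0]
        refine Finset.sum_congr rfl fun i _ => ?_
        simp [hg', i.2]
      have hval : g' i0 ≠ 0 := by simpa [hg', i0.2] using hgi0
      rcases lt_or_gt_of_ne hval with hneg | hposi
      · refine ⟨-g', fun j hj => hsupp j (by simpa using hj), by simp [hsum, neg_smul,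
          Finset.sum_neg_distrib], ⟨i0, by simpa using hneg⟩⟩
      · exact ⟨g', hsupp, hsum, ⟨i0, hposi⟩⟩
    obtain ⟨h, hsupp, hsum, jpos, hjpos⟩ := hext
    -- minimize lam j / h j over positive part
    obtain ⟨j0, hj0mem, hj0min⟩ := Finset.exists_min_image
      (univ.filter fun j => 0 < h j) (fun j => lam j / h j) ⟨jpos, by simpa using hjpos⟩
    have hj0pos : 0 < h j0 := (Finset.mem_filter.mp hj0mem).2
    set c : ℝ := lam j0 / h j0 with hc
    have hc0 : 0 ≤ c := div_nonneg (hpos j0) hj0pos.le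
    set mu : ι → ℝ := fun j => lam j - c * h j with hmu
    have hmupos : ∀ j, 0 ≤ mu j := by
      intro j
      rcases le_or_gt (h j) 0 with hle | hgt
      · have : c * h j ≤ 0 := mul_nonpos_of_nonneg_of_nonpos hc0 hle
        have := hpos j
        simp only [hmu]; linarith
      · have hcle : c ≤ lam j / h j := hj0min j (by simpa using hgt)
        have : c * h j ≤ lam j := (le_div_iff₀ hgt).mp hcle
        simp only [hmu]; linarith
    have hmusum : ∑ j, mu j • v j = ∑ j, lam j • v j := by
      simp only [hmu, sub_smul, Finset.sum_sub_distrib, mul_smul]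
      rw [← Finset.smul_sum, hsum, smul_zero, sub_zero]
    have hsub : (univ.filter fun j => mu j ≠ 0) ⊆ T.erase j0 := by
      intro j hj
      rw [Finset.mem_filter] at hj
      refine Finset.mem_erase.mpr ⟨?_, ?_⟩
      · rintro rfl
        apply hj.2
        have hne := hj0pos.ne'
        simp only [hmu, hc]
        field_simp
        ring
      · by_contra hjT
        apply hj.2
        have h1 : lam j = 0 := by
          by_contra h1
          exact hjT (by simp [hT, h1])
        have h2 : h j = 0 := by
          by_contra h2
          exact hjT (hsupp j h2)
        simp [hmu, h1, h2]
    have hj0T : j0 ∈ T := hsupp j0 (ne_of_gt hj0pos)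
    have hcardT : T.card ≤ N + 1 := hcard
    have hcard' : (univ.filter fun j => mu j ≠ 0).card ≤ N := by
      have h1 := Finset.card_le_card hsub
      have h2 := Finset.card_erase_of_mem hj0T
      omega
    obtain ⟨nu, h1, h2, h3⟩ := ih mu hcard' hmupos
    exact ⟨nu, h1, h2.trans hmusum, h3⟩


lemma combo_ker {n : ℕ} {ι : Type} [Fintype ι] {w : ι → (Fin n → ℝ)}
    (hw : LinearIndependent ℝ w) : LinearMap.ker (combo w) = ⊥ := by
  rw [LinearMap.ker_eq_bot']
  intro f hf
  have := Fintype.linearIndependent_iff.mp hw f hf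
  funext j; exact this j

/-- cone over a linearly independent family is closed -/
lemma isClosed_combo_image {n : ℕ} {ι : Type} [Fintype ι] {w : ι → (Fin n → ℝ)}
    (hw : LinearIndependent ℝ w) :
    IsClosed ((combo w) '' {f | ∀ j, 0 ≤ f j}) := by
  have hemb := LinearMap.isClosedEmbedding_of_injective (combo_ker hw)
  refine hemb.isClosedMap _ ?_
  have : {f : ι → ℝ | ∀ j, 0 ≤ f j} = ⋂ j, {f | 0 ≤ f j} := by
    ext f; simp [Set.mem_iInter]
  rw [this]
  exact isClosed_iInter fun j => isClosed_le continuous_const (continuous_apply j)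

open Finset in
lemma isClosed_coneOf {n s : ℕ} (v : Fin s → (Fin n → ℝ)) : IsClosed (coneOf v) := by
  classical
  have heq : coneOf v = ⋃ t : {t : Finset (Fin s) //
      LinearIndependent ℝ (fun j : (t : Finset (Fin s)) => v j)},
      (combo (fun j : (t.1 : Finset (Fin s)) => v j)) '' {f | ∀ j, 0 ≤ f j} := by
    ext x
    constructor
    · rintro ⟨lam, hpos, rfl⟩
      obtain ⟨mu, h1, h2, h3⟩ := carath v _ lam le_rfl hpos
      refine Set.mem_iUnion.mpr ⟨⟨_, h3⟩, ⟨fun j => mu j, fun j => h1 j, ?_⟩⟩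
      show ∑ j : (univ.filter fun j => mu j ≠ 0 : Finset (Fin s)), mu j • v j = _
      rw [Finset.sum_coe_sort _ (fun j => mu j • v j),
        Finset.sum_subset (Finset.subset_univ _)]
      · exact h2
      · intro j _ hj
        have : mu j = 0 := by by_contra h; exact hj (by simp [h])
        simp [this]
    · intro hx
      obtain ⟨⟨t, ht⟩, f, hf, rfl⟩ := Set.mem_iUnion.mp hx
      refine ⟨fun j => if hj : j ∈ t then f ⟨j, hj⟩ else 0, ?_, ?_⟩
      · intro j; by_cases hj : j ∈ t <;> simp [hj, hf _]
      · show _ = ∑ j, _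
        rw [← Finset.sum_subset (Finset.subset_univ t)
          (by intro j _ hj; simp [hj]),
          ← Finset.sum_coe_sort t]
        show (∑ j : t, f j • v j) = _
        refine Finset.sum_congr rfl fun j _ => ?_
        simp [j.2]
  rw [heq]
  exact isClosed_iUnion_of_finite fun t => isClosed_combo_image t.2

lemma zero_mem_coneOf {n s : ℕ} (v : Fin s → (Fin n → ℝ)) : (0 : Fin n → ℝ) ∈ coneOf v :=
  ⟨0, fun _ => le_rfl, by simp⟩

lemma smul_mem_coneOf {n s : ℕ} {v : Fin s → (Fin n → ℝ)} {c : ℝ} (hc : 0 ≤ c)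
    {x : Fin n → ℝ} (hx : x ∈ coneOf v) : c • x ∈ coneOf v := by
  obtain ⟨lam, hpos, rfl⟩ := hx
  exact ⟨fun j => c * lam j, fun j => mul_nonneg hc (hpos j),
    by rw [Finset.smul_sum]; simp [mul_smul]⟩

lemma add_mem_coneOf {n s : ℕ} {v : Fin s → (Fin n → ℝ)}
    {x y : Fin n → ℝ} (hx : x ∈ coneOf v) (hy : y ∈ coneOf v) : x + y ∈ coneOf v := by
  obtain ⟨lam, hlam, rfl⟩ := hx
  obtain ⟨mu, hmu, rfl⟩ := hy
  exact ⟨fun j => lam j + mu j, fun j => add_nonneg (hlam j) (hmu j),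
    by simp [add_smul, Finset.sum_add_distrib]⟩

lemma eq_zero_of_dotp_eq_zero {n : ℕ} (σ : Set (Fin n → ℝ)) (hσ : IsPolyCone σ)
    (hpt : IsPointed σ) {x : Fin n → ℝ} (hx : ∀ u ∈ polarCone σ, dotp u x = 0) : x = 0 := by
  obtain ⟨s, v, rfl⟩ := hσ
  have hkey : ∀ y : Fin n → ℝ, (∀ u ∈ polarCone (coneOf v), dotp u y = 0) → y ∈ coneOf v := by
    intro y hy
    by_contra hyn
    have hconv : Convex ℝ (coneOf v) := fun a ha b hb s t hs ht _ =>
      add_mem_coneOf (smul_mem_coneOf hs ha) (smul_mem_coneOf ht hb)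
    obtain ⟨f, u, hfu, hux⟩ := geometric_hahn_banach_closed_point hconv (isClosed_coneOf v) hyn
    have hu0 : 0 < u := by simpa using hfu 0 (zero_mem_coneOf v)
    have hle : ∀ z ∈ coneOf v, f z ≤ 0 := by
      intro z hz
      by_contra hpos
      push_neg at hpos
      have := hfu ((2 * u / f z) • z) (smul_mem_coneOf (div_nonneg (by linarith) hpos.le) hz)
      rw [map_smul, smul_eq_mul, div_mul_cancel₀ _ hpos.ne'] at this
      linarith
    set w : Fin n → ℝ := fun i => f (fun j => if i = j then 1 else 0) with hw
    have hfz : ∀ z, f z = dotp w z := by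
      intro z
      have := LinearMap.pi_apply_eq_sum_univ (f : (Fin n → ℝ) →ₗ[ℝ] ℝ) z
      simp only [ContinuousLinearMap.coe_coe] at this
      rw [this]
      simp only [dotp, smul_eq_mul, w]
      exact Finset.sum_congr rfl fun i _ => mul_comm _ _
    have hwp : w ∈ polarCone (coneOf v) := by
      intro z hz
      rw [← hfz]
      exact hle z hz
    have h2 := hy w hwp
    rw [hfz] at hux
    linarith
  have hxσ : x ∈ coneOf v := hkey x hx
  have hmxσ : -x ∈ coneOf v := by
    refine hkey (-x) fun u hu => ?_
    have := hx u hu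
    simp only [dotp, Pi.neg_apply, mul_neg] at this ⊢
    rw [Finset.sum_neg_distrib, neg_eq_zero]
    exact this
  have hsub : (Submodule.span ℝ {x} : Set (Fin n → ℝ)) ⊆ coneOf v := by
    intro y hy
    rw [SetLike.mem_coe, Submodule.mem_span_singleton] at hy
    obtain ⟨c, rfl⟩ := hy
    rcases le_or_gt 0 c with h | h
    · exact smul_mem_coneOf h hxσ
    · have hcx : c • x = (-c) • (-x) := by simp
      rw [hcx]
      exact smul_mem_coneOf (by linarith) hmxσ
  have hW := hpt _ hsub
  have hx0 : x ∈ Submodule.span ℝ {x} := Submodule.mem_span_singleton_self x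
  rw [hW] at hx0
  simpa using hx0

def dotL {n : ℕ} (σ : Set (Fin n → ℝ)) : (Fin n → ℝ) →ₗ[ℝ] (↥(polarCone σ) → ℝ) where
  toFun v := fun u => dotp (u : Fin n → ℝ) v
  map_add' a b := by
    funext u
    simp [dotp, mul_add, Finset.sum_add_distrib]
  map_smul' c a := by
    funext u
    simp only [dotp, Pi.smul_apply, smul_eq_mul, RingHom.id_apply]
    rw [Finset.mul_sum]
    exact Finset.sum_congr rfl fun i _ => by ring

lemma isEmbedding_piCoe (I : Type) :
    IsEmbedding (fun (f : I → ℝ) (i : I) => ((f i : EReal))) := by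
  refine ⟨⟨?_⟩, ?_⟩
  · show _ = TopologicalSpace.induced _ _
    rw [Pi.topologicalSpace, Pi.topologicalSpace, induced_iInf]
    refine iInf_congr fun i => ?_
    rw [induced_compose, EReal.isEmbedding_coe.isInducing.eq_induced, induced_compose]
    rfl
  · intro f g h
    funext i
    exact EReal.isEmbedding_coe.injective (congrFun h i)

end AuxStmt

/-- If `σ ⊆ ℝⁿ` is a pointed polyhedral cone, then the canonical map
`j : N_ℝ → N_ℝ(σ)`, `v ↦ (u ↦ ⟨u,v⟩)`, takes values in `N_ℝ(σ)` and is injective,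
continuous, and a topological embedding (a homeomorphism onto its image).
Since `N_ℝ(σ)` carries the subspace topology of the product `σ∨ → EReal`, being an
embedding into the latter with range inside `N_ℝ(σ)` is equivalent to being an
embedding into `N_ℝ(σ)`. -/
theorem stmt1 {n : ℕ} (σ : Set (Fin n → ℝ)) (hσ : IsPolyCone σ) (hpt : IsPointed σ) :
    (∀ v : Fin n → ℝ, jmap σ v ∈ NRc σ) ∧ Function.Injective (jmap σ) ∧
      Continuous (jmap σ) ∧ IsEmbedding (jmap σ) := by
  have hker : LinearMap.ker (AuxStmt.dotL σ) = ⊥ := by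
    rw [LinearMap.ker_eq_bot']
    intro v hv
    exact AuxStmt.eq_zero_of_dotp_eq_zero σ hσ hpt fun u hu => congrFun hv ⟨u, hu⟩
  have hL := LinearMap.isClosedEmbedding_of_injective hker
  have hpi := AuxStmt.isEmbedding_piCoe ↥(polarCone σ)
  have hcomp : jmap σ = (fun (f : ↥(polarCone σ) → ℝ) (u : ↥(polarCone σ)) => ((f u : EReal)))
      ∘ (AuxStmt.dotL σ) := rfl
  have hemb : IsEmbedding (jmap σ) := by
    rw [hcomp]
    exact hpi.comp hL.isEmbedding
  refine ⟨?_, hemb.injective, hemb.continuous, hemb⟩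
  intro v
  refine ⟨fun u => EReal.coe_ne_top _, ?_, ?_⟩
  · intro u u' h
    show ((dotp _ v : ℝ) : EReal) = ((dotp _ v : ℝ) : EReal) + ((dotp _ v : ℝ) : EReal)
    rw [← EReal.coe_add]
    congr 1
    simp [dotp, add_mul, Finset.sum_add_distrib]
  · intro c hc u h
    show ((dotp _ v : ℝ) : EReal) = (c : EReal) * ((dotp _ v : ℝ) : EReal)
    rw [← EReal.coe_mul]
    congr 1
    simp only [dotp, Pi.smul_apply, smul_eq_mul]
    rw [Finset.mul_sum]
    exact Finset.sum_congr rfl fun i _ => by ring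


end
end

section
/- Let P = {v ∈ ℝ^n : ⟨u_i,v⟩ ≤ a_i, i = 1,…,r} be a pointed polyhedron with recession cone σ = Recc(P). Then the compactification P̄, defined as the closure of j(P) in N_ℝ(σ) where j : N_ℝ → N_ℝ(σ) sends v to the function u ↦ ⟨u,v⟩, is a compact subset of N_ℝ(σ). -/
open Topology

noncomputable section

namespace Stmt2Aux

variable {n : ℕ}

lemma dotp_comm (u v : Fin n → ℝ) : dotp u v = dotp v u := by
  simp [dotp, mul_comm]

lemma dotp_add_left (u u' v : Fin n → ℝ) : dotp (u + u') v = dotp u v + dotp u' v := by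
  simp [dotp, add_mul, Finset.sum_add_distrib]

lemma dotp_smul_left (c : ℝ) (u v : Fin n → ℝ) : dotp (c • u) v = c * dotp u v := by
  simp [dotp, mul_assoc, Finset.mul_sum]

lemma dotp_neg_right (u v : Fin n → ℝ) : dotp u (-v) = -dotp u v := by
  simp [dotp, mul_neg]

lemma dotp_sum_left {ι : Type*} (s : Finset ι) (f : ι → Fin n → ℝ) (v : Fin n → ℝ) :
    dotp (∑ j ∈ s, f j) v = ∑ j ∈ s, dotp (f j) v := by
  simp only [dotp, Finset.sum_apply, Finset.sum_mul]
  exact Finset.sum_comm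

lemma isClosed_coneSet_of_li {α : Type} [Fintype α] {v : α → (Fin n → ℝ)}
    (hv : LinearIndependent ℝ v) :
    IsClosed {x | ∃ lam : α → ℝ, (∀ j, 0 ≤ lam j) ∧ x = ∑ j, lam j • v j} := by
  set T : (α → ℝ) →ₗ[ℝ] (Fin n → ℝ) := Fintype.linearCombination ℝ v with hT
  have hker : LinearMap.ker T = ⊥ := by
    rw [LinearMap.ker_eq_bot']
    intro g hg
    have h0 : ∑ i, g i • v i = 0 := by
      simpa [hT, Fintype.linearCombination_apply] using hg
    have := Fintype.linearIndependent_iff.mp hv g h0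
    funext i; exact this i
  have hemb := LinearMap.isClosedEmbedding_of_injective hker
  have horth : IsClosed {lam : α → ℝ | ∀ j, 0 ≤ lam j} := by
    have : {lam : α → ℝ | ∀ j, 0 ≤ lam j} = ⋂ j, (fun lam : α → ℝ => lam j) ⁻¹' Set.Ici 0 := by
      ext lam; simp [Set.mem_iInter]
    rw [this]
    exact isClosed_iInter fun j => isClosed_Ici.preimage (continuous_apply j)
  have himg : {x | ∃ lam : α → ℝ, (∀ j, 0 ≤ lam j) ∧ x = ∑ j, lam j • v j}
      = T '' {lam : α → ℝ | ∀ j, 0 ≤ lam j} := by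
    ext x
    simp only [Set.mem_setOf_eq, Set.mem_image, hT, Fintype.linearCombination_apply]
    constructor
    · rintro ⟨lam, h1, rfl⟩; exact ⟨lam, h1, rfl⟩
    · rintro ⟨lam, h1, rfl⟩; exact ⟨lam, h1, rfl⟩
  rw [himg]
  exact hemb.isClosedMap _ horth

lemma sum_subtype_ne {α : Type} [Fintype α] [DecidableEq α] (j0 : α) (f : α → (Fin n → ℝ))
    (hj0 : f j0 = 0) : ∑ i : {i : α // i ≠ j0}, f ↑i = ∑ i, f i := by
  have h1 : ∑ i : {i : α // i ≠ j0}, f ↑i = ∑ i ∈ Finset.univ.erase j0, f i := by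
    rw [Finset.sum_subtype (p := fun i => i ≠ j0) (Finset.univ.erase j0) (by simp) f]
  rw [h1, Finset.sum_erase _ hj0]

lemma isClosed_coneSet : ∀ (k : ℕ) (α : Type) [Fintype α], Fintype.card α ≤ k →
    ∀ (v : α → (Fin n → ℝ)),
    IsClosed {x | ∃ lam : α → ℝ, (∀ j, 0 ≤ lam j) ∧ x = ∑ j, lam j • v j} := by
  intro k
  induction k with
  | zero =>
    intro α _ hcard v
    have : IsEmpty α := Fintype.card_eq_zero_iff.mp (Nat.le_zero.mp hcard)
    exact isClosed_coneSet_of_li linearIndependent_empty_type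
  | succ k ih =>
    intro α _ hcard v
    classical
    by_cases hli : LinearIndependent ℝ v
    · exact isClosed_coneSet_of_li hli
    · obtain ⟨g, hgsum, hgneg⟩ : ∃ g : α → ℝ, ∑ j, g j • v j = 0 ∧ ∃ j, g j < 0 := by
        obtain ⟨g, hgsum, i0, hi0⟩ := Fintype.not_linearIndependent_iff.mp hli
        rcases lt_or_gt_of_ne hi0 with h | h
        · exact ⟨g, hgsum, i0, h⟩
        · refine ⟨-g, ?_, i0, by simpa using h⟩
          have : ∑ j, (-g) j • v j = -∑ j, g j • v j := by
            simp [neg_smul, Finset.sum_neg_distrib]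
          rw [this, hgsum, neg_zero]
      obtain ⟨j0, hj0⟩ := hgneg
      have hcard' : ∀ j : α, Fintype.card {i : α // i ≠ j} ≤ k := by
        intro j
        have h1 : Fintype.card {i : α // i ≠ j} = Fintype.card α - 1 := by
          rw [Fintype.card_subtype_compl, Fintype.card_subtype_eq]
        have h2 : 1 ≤ Fintype.card α := Fintype.card_pos_iff.mpr ⟨j⟩
        omega
      have hdecomp : {x | ∃ lam : α → ℝ, (∀ j, 0 ≤ lam j) ∧ x = ∑ j, lam j • v j}
          = ⋃ j1 : {j : α // g j < 0},
            {x | ∃ lam : {i : α // i ≠ (j1 : α)} → ℝ, (∀ i, 0 ≤ lam i) ∧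
              x = ∑ i, lam i • v ↑i} := by
        ext x
        simp only [Set.mem_setOf_eq, Set.mem_iUnion]
        constructor
        · rintro ⟨lam, hlam, rfl⟩
          set T : Finset α := Finset.univ.filter (fun j => g j < 0) with hT
          have hTne : T.Nonempty := ⟨j0, by simp [hT, hj0]⟩
          obtain ⟨j1, hj1T, hj1min⟩ := T.exists_min_image (fun j => lam j / (-g j)) hTne
          have hgj1 : g j1 < 0 := by simpa [hT] using hj1T
          set t := lam j1 / (-g j1) with ht
          have ht0 : 0 ≤ t := div_nonneg (hlam j1) (by linarith)
          have hlam' : ∀ i, 0 ≤ lam i + t * g i := by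
            intro i
            rcases lt_or_ge (g i) 0 with h | h
            · have hiT : i ∈ T := by simp [hT, h]
              have hmin := hj1min i hiT
              have h2 : t * (-g i) ≤ lam i := by
                calc t * (-g i) ≤ (lam i / (-g i)) * (-g i) :=
                      mul_le_mul_of_nonneg_right hmin (by linarith)
                  _ = lam i := div_mul_cancel₀ _ (by linarith)
              nlinarith
            · exact add_nonneg (hlam i) (mul_nonneg ht0 h)
          have hzero : lam j1 + t * g j1 = 0 := by
            have h2 : t * -g j1 = lam j1 := by
              rw [ht]; exact div_mul_cancel₀ _ (by linarith)
            linarith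
          refine ⟨⟨j1, hgj1⟩, fun i => lam ↑i + t * g ↑i, fun i => hlam' ↑i, ?_⟩
          have hx : ∑ i, (lam i + t * g i) • v i = ∑ i, lam i • v i := by
            have : ∑ i, (lam i + t * g i) • v i
                = (∑ i, lam i • v i) + t • (∑ i, g i • v i) := by
              rw [Finset.smul_sum]
              simp [add_smul, mul_smul, Finset.sum_add_distrib]
            rw [this, hgsum, smul_zero, add_zero]
          rw [← hx]
          rw [← sum_subtype_ne (j1 : α) (fun i => (lam i + t * g i) • v i)
            (by simp [hzero])]
        · rintro ⟨j1, lam, hlam, rfl⟩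
          refine ⟨fun i => if h : i = (j1 : α) then 0 else lam ⟨i, h⟩, ?_, ?_⟩
          · intro i; dsimp only; split
            · exact le_refl 0
            · exact hlam _
          · rw [← sum_subtype_ne (j1 : α)
              (fun i => (if h : i = (j1 : α) then 0 else lam ⟨i, h⟩) • v i) (by simp)]
            apply Finset.sum_congr rfl
            intro i _
            simp [i.2]
      rw [hdecomp]
      exact isClosed_iUnion_of_finite fun j1 => ih _ (hcard' ↑j1) _

lemma isClosed_coneOf {s : ℕ} (v : Fin s → (Fin n → ℝ)) : IsClosed (coneOf v) :=
  isClosed_coneSet s (Fin s) (le_of_eq (Fintype.card_fin s)) v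

lemma coneOf_zero_mem {s : ℕ} (v : Fin s → (Fin n → ℝ)) : 0 ∈ coneOf v :=
  ⟨0, fun _ => le_refl 0, by simp⟩

lemma coneOf_generator_mem {s : ℕ} (v : Fin s → (Fin n → ℝ)) (j : Fin s) : v j ∈ coneOf v := by
  classical
  refine ⟨fun k => if k = j then 1 else 0, fun k => by positivity, ?_⟩
  simp [ite_smul]

lemma coneOf_add_mem {s : ℕ} {v : Fin s → (Fin n → ℝ)} {x y : Fin n → ℝ}
    (hx : x ∈ coneOf v) (hy : y ∈ coneOf v) : x + y ∈ coneOf v := by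
  obtain ⟨a, ha, rfl⟩ := hx
  obtain ⟨b, hb, rfl⟩ := hy
  exact ⟨a + b, fun j => add_nonneg (ha j) (hb j), by simp [add_smul, Finset.sum_add_distrib]⟩

lemma coneOf_smul_mem {s : ℕ} {v : Fin s → (Fin n → ℝ)} {c : ℝ} (hc : 0 ≤ c) {x : Fin n → ℝ}
    (hx : x ∈ coneOf v) : c • x ∈ coneOf v := by
  obtain ⟨a, ha, rfl⟩ := hx
  exact ⟨fun j => c * a j, fun j => mul_nonneg hc (ha j),
    by rw [Finset.smul_sum]; simp [mul_smul]⟩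

/-- Farkas: the polar of the cone cut out by finitely many linear constraints is the
finitely generated cone on those constraints. -/
lemma farkas {s : ℕ} (w : Fin s → (Fin n → ℝ)) {x : Fin n → ℝ}
    (hx : x ∈ polarCone {v | ∀ j, dotp (w j) v ≤ 0}) : x ∈ coneOf w := by
  classical
  set e := PiLp.continuousLinearEquiv 2 ℝ (fun _ : Fin n => ℝ) with he
  have hinner : ∀ a b : EuclideanSpace ℝ (Fin n), (inner ℝ a b : ℝ) = dotp (e a) (e b) := by
    intro a b
    simp [PiLp.inner_apply, RCLike.inner_apply, dotp, he, mul_comm]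
  set K : ConvexCone ℝ (EuclideanSpace ℝ (Fin n)) :=
    { carrier := ⇑e ⁻¹' (coneOf w)
      smul_mem' := by
        intro c hc z hz
        show e (c • z) ∈ coneOf w
        rw [map_smul]
        exact coneOf_smul_mem (le_of_lt hc) hz
      add_mem' := by
        intro z hz z' hz'
        show e (z + z') ∈ coneOf w
        rw [map_add]
        exact coneOf_add_mem hz hz' } with hK
  have hKclosed : IsClosed (K : Set (EuclideanSpace ℝ (Fin n))) :=
    (isClosed_coneOf w).preimage e.continuous
  have hKne : (K : Set (EuclideanSpace ℝ (Fin n))).Nonempty :=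
    ⟨0, show e 0 ∈ coneOf w by rw [map_zero]; exact coneOf_zero_mem w⟩
  set C : ProperCone ℝ (EuclideanSpace ℝ (Fin n)) :=
    { carrier := ⇑e ⁻¹' (coneOf w)
      add_mem' := fun {z z'} hz hz' => by
        show e (z + z') ∈ coneOf w
        rw [map_add]
        exact coneOf_add_mem hz hz'
      zero_mem' := show e 0 ∈ coneOf w by rw [map_zero]; exact coneOf_zero_mem w
      smul_mem' := fun c z hz => by
        show e ((c : ℝ) • z) ∈ coneOf w
        rw [map_smul]
        exact coneOf_smul_mem c.2 hz
      isClosed' := hKclosed } with hC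
  have hdd := ProperCone.innerDual_innerDual C
  have hx' : e.symm x ∈ ProperCone.innerDual
      (ProperCone.innerDual (C : Set (EuclideanSpace ℝ (Fin n))) :
        Set (EuclideanSpace ℝ (Fin n))) := by
    rw [ProperCone.mem_innerDual]
    intro y hy
    replace hy : ∀ z ∈ (K : Set (EuclideanSpace ℝ (Fin n))), 0 ≤ (inner ℝ z y : ℝ) :=
      ProperCone.mem_innerDual.mp hy
    have hyσ : -(e y) ∈ {v : Fin n → ℝ | ∀ j, dotp (w j) v ≤ 0} := by
      intro j
      have hgen : e.symm (w j) ∈ (K : Set (EuclideanSpace ℝ (Fin n))) := by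
        show e (e.symm (w j)) ∈ coneOf w
        rw [e.apply_symm_apply]
        exact coneOf_generator_mem w j
      have := hy _ hgen
      rw [hinner, e.apply_symm_apply] at this
      show dotp (w j) (-(e y)) ≤ 0
      rw [dotp_neg_right]
      linarith
    have h2 := hx _ hyσ
    rw [dotp_neg_right] at h2
    rw [hinner, e.apply_symm_apply, dotp_comm]
    linarith
  rw [hdd] at hx'
  have : e (e.symm x) ∈ coneOf w := hx'
  rwa [e.apply_symm_apply] at this

lemma polar_add_mem {σ : Set (Fin n → ℝ)} {w w' : Fin n → ℝ}
    (h : w ∈ polarCone σ) (h' : w' ∈ polarCone σ) : w + w' ∈ polarCone σ := by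
  intro v hv
  have h1 := h v hv; have h2 := h' v hv
  rw [dotp_add_left]; linarith

lemma polar_smul_mem {σ : Set (Fin n → ℝ)} {c : ℝ} (hc : 0 ≤ c) {w : Fin n → ℝ}
    (h : w ∈ polarCone σ) : c • w ∈ polarCone σ := by
  intro v hv
  rw [dotp_smul_left]
  exact mul_nonpos_of_nonneg_of_nonpos hc (h v hv)

lemma main_aux (σ P : Set (Fin n → ℝ))
    (hbdd : ∀ w : ↥(polarCone σ), ∃ m : ℝ, ∀ v ∈ P, dotp (w : Fin n → ℝ) v ≤ m) :
    IsCompact (closure ((fun φ : ↥(NRc σ) => (φ : ↥(polarCone σ) → EReal)) ⁻¹'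
      (jmap σ '' P))) := by
  classical
  choose M hM using hbdd
  have haddm : ∀ q : ↥(polarCone σ) × ↥(polarCone σ),
      ((q.1 : Fin n → ℝ) + (q.2 : Fin n → ℝ)) ∈ polarCone σ :=
    fun q => polar_add_mem q.1.2 q.2.2
  have hsmulm : ∀ p : {c : ℝ // 0 ≤ c} × ↥(polarCone σ),
      ((p.1 : ℝ) • (p.2 : Fin n → ℝ)) ∈ polarCone σ :=
    fun p => polar_smul_mem p.1.2 p.2.2
  set B : Set (↥(polarCone σ) → EReal) := {φ | ∀ w, φ w ≤ ((M w : ℝ) : EReal)} with hB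
  have hBclosed : IsClosed B := by
    have : B = ⋂ w, (fun φ : ↥(polarCone σ) → EReal => φ w) ⁻¹' Set.Iic ((M w : ℝ) : EReal) := by
      ext φ; simp [hB, Set.mem_iInter]
    rw [this]
    exact isClosed_iInter fun w => isClosed_Iic.preimage (continuous_apply w)
  set A : (↥(polarCone σ) × ↥(polarCone σ)) → Set (↥(polarCone σ) → EReal) :=
    fun q => {φ | φ ⟨(q.1 : Fin n → ℝ) + (q.2 : Fin n → ℝ), haddm q⟩ = φ q.1 + φ q.2} with hA
  set H : ({c : ℝ // 0 ≤ c} × ↥(polarCone σ)) → Set (↥(polarCone σ) → EReal) :=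
    fun p => {φ | φ ⟨(p.1 : ℝ) • (p.2 : Fin n → ℝ), hsmulm p⟩ = ((p.1 : ℝ) : EReal) * φ p.2}
    with hH
  have hBA : ∀ q, IsClosed (B ∩ A q) := by
    intro q
    have hcont : ContinuousOn (fun φ : ↥(polarCone σ) → EReal =>
        (φ ⟨(q.1 : Fin n → ℝ) + (q.2 : Fin n → ℝ), haddm q⟩, φ q.1 + φ q.2)) B := by
      apply ContinuousOn.prodMk
      · exact (continuous_apply _).continuousOn
      · intro φ hφ
        apply ContinuousAt.continuousWithinAt
        have h1 : φ q.1 ≠ ⊤ := ((hφ q.1).trans_lt (EReal.coe_lt_top _)).ne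
        have h2 : φ q.2 ≠ ⊤ := ((hφ q.2).trans_lt (EReal.coe_lt_top _)).ne
        have hadd := EReal.continuousAt_add (p := (φ q.1, φ q.2)) (Or.inl h1) (Or.inr h2)
        have hg : ContinuousAt (fun ψ : ↥(polarCone σ) → EReal => (ψ q.1, ψ q.2)) φ :=
          Continuous.continuousAt ((continuous_apply q.1).prodMk (continuous_apply q.2))
        exact Filter.Tendsto.comp hadd hg
    have hpre := hcont.preimage_isClosed_of_isClosed hBclosed isClosed_diagonal
    have hset : B ∩ A q = B ∩ (fun φ : ↥(polarCone σ) → EReal =>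
        (φ ⟨(q.1 : Fin n → ℝ) + (q.2 : Fin n → ℝ), haddm q⟩, φ q.1 + φ q.2)) ⁻¹'
        Set.diagonal EReal := by
      ext φ
      simp [hA, Set.mem_diagonal_iff]
    rw [hset]
    exact hpre
  have hHc : ∀ p, IsClosed (H p) := by
    intro p
    rcases eq_or_lt_of_le p.1.2 with hc0 | hc0
    · have hc0' : (p.1 : ℝ) = 0 := hc0.symm
      have hE : ((p.1 : ℝ) : EReal) = 0 := by exact_mod_cast hc0'
      have hzero : H p = {φ : ↥(polarCone σ) → EReal |
          φ ⟨(p.1 : ℝ) • (p.2 : Fin n → ℝ), hsmulm p⟩ = 0} := by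
        ext φ
        show (φ ⟨(p.1 : ℝ) • (p.2 : Fin n → ℝ), hsmulm p⟩ = ((p.1 : ℝ) : EReal) * φ p.2) ↔
          (φ ⟨(p.1 : ℝ) • (p.2 : Fin n → ℝ), hsmulm p⟩ = 0)
        rw [hE, EReal.zero_mul]
      rw [hzero]
      exact isClosed_eq (continuous_apply _) continuous_const
    · apply isClosed_eq (continuous_apply _)
      refine continuous_iff_continuousAt.mpr fun φ => ?_
      have hne : (((p.1 : ℝ)) : EReal) ≠ 0 := by
        simp only [ne_eq, EReal.coe_eq_zero]
        exact hc0.ne'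
      have hmul := EReal.continuousAt_mul (p := (((p.1 : ℝ) : EReal), φ p.2))
        (Or.inl hne) (Or.inl hne)
        (Or.inl (EReal.coe_ne_bot _)) (Or.inl (EReal.coe_ne_top _))
      have hg : ContinuousAt (fun ψ : ↥(polarCone σ) → EReal =>
          ((((p.1 : ℝ)) : EReal), ψ p.2)) φ :=
        Continuous.continuousAt (continuous_const.prodMk (continuous_apply p.2))
      show ContinuousAt ((fun q : EReal × EReal => q.1 * q.2) ∘
        (fun ψ : ↥(polarCone σ) → EReal => ((((p.1 : ℝ)) : EReal), ψ p.2))) φ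
      exact ContinuousAt.comp hmul hg
  set C := (B ∩ ⋂ q, (B ∩ A q)) ∩ ⋂ p, H p with hC
  have hCclosed : IsClosed C :=
    (hBclosed.inter (isClosed_iInter hBA)).inter (isClosed_iInter hHc)
  have hCcompact : IsCompact C := hCclosed.isCompact
  have hCN : C ⊆ NRc σ := by
    rintro φ ⟨⟨hφB, hφA⟩, hφH⟩
    refine ⟨fun w => ((hφB w).trans_lt (EReal.coe_lt_top _)).ne, fun w w' h => ?_, ?_⟩
    · exact (Set.mem_iInter.mp hφA ⟨w, w'⟩).2
    · intro c hc w h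
      exact Set.mem_iInter.mp hφH ⟨⟨c, hc⟩, w⟩
  have hPC : jmap σ '' P ⊆ C := by
    rintro _ ⟨v, hv, rfl⟩
    refine ⟨⟨fun w => EReal.coe_le_coe_iff.mpr (hM w v hv), Set.mem_iInter.mpr fun q =>
      ⟨fun w => EReal.coe_le_coe_iff.mpr (hM w v hv), ?_⟩⟩, Set.mem_iInter.mpr fun p => ?_⟩
    · show ((dotp ((q.1 : Fin n → ℝ) + (q.2 : Fin n → ℝ)) v : ℝ) : EReal) = _
      rw [dotp_add_left, EReal.coe_add]
      rfl
    · show ((dotp ((p.1 : ℝ) • (p.2 : Fin n → ℝ)) v : ℝ) : EReal) = _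
      rw [dotp_smul_left, EReal.coe_mul]
      rfl
  have hsub : IsCompact (Subtype.val ⁻¹' C : Set ↥(NRc σ)) := by
    rw [Subtype.isCompact_iff, Subtype.image_preimage_coe,
      Set.inter_eq_self_of_subset_right hCN]
    exact hCcompact
  refine hsub.of_isClosed_subset isClosed_closure
    (closure_minimal (Set.preimage_mono hPC) hsub.isClosed)

end Stmt2Aux

/-- Let `P = {v | ⟨u_i, v⟩ ≤ a_i}` be a pointed polyhedron with recession
cone `σ = Recc(P) = {v | ⟨u_i, v⟩ ≤ 0}`.  Then the compactification `P̄`, i.e. the closure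
of `j(P)` inside the subspace `N_ℝ(σ)` of `σ∨ → EReal` (where `j(v)(u) = ⟨u,v⟩`), is a
compact subset of `N_ℝ(σ)`. -/
theorem stmt2 {n r : ℕ} (u : Fin r → (Fin n → ℝ)) (a : Fin r → ℝ)
    (P σ : Set (Fin n → ℝ))
    (hP : P = {v | ∀ i, dotp (u i) v ≤ a i})
    (hσ : σ = {v | ∀ i, dotp (u i) v ≤ 0})
    (hpt : IsPointed σ) :
    IsCompact (closure ((fun φ : ↥(NRc σ) => (φ : ↥(polarCone σ) → EReal)) ⁻¹' (jmap σ '' P))) := by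
  have hbdd : ∀ w : ↥(polarCone σ), ∃ m : ℝ, ∀ v ∈ P, dotp (w : Fin n → ℝ) v ≤ m := by
    intro w
    have hw : (w : Fin n → ℝ) ∈ polarCone {v | ∀ i, dotp (u i) v ≤ 0} := by
      rw [← hσ]; exact w.2
    obtain ⟨lam, hlam, hsum⟩ := Stmt2Aux.farkas u hw
    refine ⟨∑ i, lam i * a i, fun v hv => ?_⟩
    rw [hP] at hv
    calc dotp (w : Fin n → ℝ) v = ∑ i, lam i * dotp (u i) v := by
          rw [hsum, Stmt2Aux.dotp_sum_left]
          exact Finset.sum_congr rfl fun i _ => Stmt2Aux.dotp_smul_left _ _ _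
      _ ≤ ∑ i, lam i * a i :=
          Finset.sum_le_sum fun i _ => mul_le_mul_of_nonneg_left (hv i) (hlam i)
  exact Stmt2Aux.main_aux σ P hbdd

end
end

section
/- Let P ⊆ ℝ^n be a pointed polyhedron with recession cone σ = Recc(P), and let P̄ be the closure of j(P) in N_ℝ(σ), where j : N_ℝ → N_ℝ(σ) sends v to the function u ↦ ⟨u,v⟩. Then P̄ = ⋃_{τ face of σ} ι(π_τ(P)), where π_τ : N_ℝ → N_ℝ/Span(τ) is the quotient map and ι(v̄)(u) = ⟨u,v⟩ for u ∈ τ^⊥ ∩ σ∨ and ι(v̄)(u) = −∞ otherwise; moreover the sets ι(π_τ(P)) for distinct faces τ of σ are pairwise disjoint. -/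
open Topology

noncomputable section

/-- `τ` is a face of the cone `σ`: `τ = σ ∩ {v | ⟨u,v⟩ = 0}` for some `u ∈ σ∨`. -/
def IsFace {n : ℕ} (σ τ : Set (Fin n → ℝ)) : Prop :=
  ∃ u ∈ polarCone σ, τ = σ ∩ {v | dotp u v = 0}

open Classical in
/-- For a face `τ` of `σ` and `v ∈ N_ℝ`, the element `ι(π_τ(v))` of `σ∨ → EReal`:
`u ↦ ⟨u,v⟩` if `u ∈ τ^⊥ ∩ σ∨` and `u ↦ -∞` otherwise.  (Its value only depends on the
class `π_τ(v)` of `v` in `N_ℝ/Span(τ)`, so the image `iotaFace σ τ '' P` below is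
exactly `ι(π_τ(P))`.) -/
def iotaFace {n : ℕ} (σ τ : Set (Fin n → ℝ)) (v : Fin n → ℝ) : ↥(polarCone σ) → EReal :=
  fun u => if (∀ w ∈ τ, dotp (u : Fin n → ℝ) w = 0)
    then ((dotp (u : Fin n → ℝ) v : ℝ) : EReal) else ⊥


namespace Aux

lemma dotp_comm {n : ℕ} (u v : Fin n → ℝ) : dotp u v = dotp v u := by
  unfold dotp; exact Finset.sum_congr rfl fun i _ => mul_comm _ _

lemma dotp_add_left {n : ℕ} (u u' v : Fin n → ℝ) :
    dotp (u + u') v = dotp u v + dotp u' v := by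
  unfold dotp; rw [← Finset.sum_add_distrib]
  exact Finset.sum_congr rfl fun i _ => by simp [add_mul]

lemma dotp_add_right {n : ℕ} (u v v' : Fin n → ℝ) :
    dotp u (v + v') = dotp u v + dotp u v' := by
  rw [dotp_comm, dotp_add_left, dotp_comm v u, dotp_comm v' u]

lemma dotp_smul_left {n : ℕ} (c : ℝ) (u v : Fin n → ℝ) :
    dotp (c • u) v = c * dotp u v := by
  unfold dotp; rw [Finset.mul_sum]
  exact Finset.sum_congr rfl fun i _ => by simp [mul_assoc]

lemma dotp_smul_right {n : ℕ} (c : ℝ) (u v : Fin n → ℝ) :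
    dotp u (c • v) = c * dotp u v := by
  rw [dotp_comm, dotp_smul_left, dotp_comm]

lemma dotp_zero_left {n : ℕ} (v : Fin n → ℝ) : dotp 0 v = 0 := by
  unfold dotp; simp

lemma dotp_zero_right {n : ℕ} (v : Fin n → ℝ) : dotp v 0 = 0 := by
  rw [dotp_comm, dotp_zero_left]

lemma dotp_neg_left {n : ℕ} (u v : Fin n → ℝ) : dotp (-u) v = -dotp u v := by
  have h : (-u) = (-1 : ℝ) • u := by ext i; simp
  rw [h, dotp_smul_left]; ring

lemma dotp_sum_left {n : ℕ} {ι : Type*} (s : Finset ι) (f : ι → Fin n → ℝ)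
    (v : Fin n → ℝ) : dotp (∑ i ∈ s, f i) v = ∑ i ∈ s, dotp (f i) v := by
  classical
  induction s using Finset.induction with
  | empty => simp [dotp_zero_left]
  | insert a s h ih => simp [Finset.sum_insert h, dotp_add_left, ih]

def dotLin {n : ℕ} (u : Fin n → ℝ) : (Fin n → ℝ) →ₗ[ℝ] ℝ where
  toFun := dotp u
  map_add' v v' := dotp_add_right u v v'
  map_smul' c v := by simp [dotp_smul_right]

@[simp] lemma dotLin_apply {n : ℕ} (u v : Fin n → ℝ) : dotLin u v = dotp u v := rfl

def coneOf' {n : ℕ} {ι : Type} [Fintype ι] (w : ι → Fin n → ℝ) : Set (Fin n → ℝ) :=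
  {x | ∃ lam : ι → ℝ, (∀ l, 0 ≤ lam l) ∧ x = ∑ l, lam l • w l}


/-- Core one-variable elimination, real version. -/
lemma exists_t_iff {ι : Type*} [Fintype ι] (b d : ι → ℝ) :
    (∃ t : ℝ, ∀ i, b i * t ≤ d i) ↔
      ((∀ i, b i = 0 → 0 ≤ d i) ∧
        ∀ i j, b i < 0 → 0 < b j → b i * d j ≤ b j * d i) := by
  classical
  constructor
  · rintro ⟨t, ht⟩
    refine ⟨fun i hi => by have := ht i; rw [hi] at this; linarith, ?_⟩
    intro i j hi hj
    have h1 := ht i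
    have h2 := ht j
    nlinarith
  · rintro ⟨h0, hc⟩
    by_cases hneg : (Finset.univ.filter (fun i => b i < 0)).Nonempty
    · refine ⟨(Finset.univ.filter (fun i => b i < 0)).sup' hneg (fun i => d i / b i), ?_⟩
      intro i
      rcases lt_trichotomy (b i) 0 with hbi | hbi | hbi
      · have hle : d i / b i ≤ (Finset.univ.filter (fun i => b i < 0)).sup' hneg (fun i => d i / b i) :=
          Finset.le_sup' (fun i => d i / b i) (by simp only [Finset.mem_filter, Finset.mem_univ, true_and]; exact hbi)
        have : b i ≠ 0 := ne_of_lt hbi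
        calc b i * _ ≤ b i * (d i / b i) := by
              apply mul_le_mul_of_nonpos_left hle (le_of_lt hbi)
          _ = d i := by field_simp
      · simpa [hbi] using h0 i hbi
      · obtain ⟨l, hl, hsup⟩ :=
          Finset.exists_mem_eq_sup' hneg (fun i => d i / b i)
        rw [hsup]
        have hbl : b l < 0 := by simpa using hl
        have hcl := hc l i hbl hbi
        have hdl : (d l / b l) * b l = d l := div_mul_cancel₀ _ (ne_of_lt hbl)
        nlinarith [hdl]
    · by_cases hpos : (Finset.univ.filter (fun i => 0 < b i)).Nonempty
      · refine ⟨(Finset.univ.filter (fun i => 0 < b i)).inf' hpos (fun i => d i / b i), ?_⟩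
        intro i
        rcases lt_trichotomy (b i) 0 with hbi | hbi | hbi
        · exact absurd (Finset.filter_nonempty_iff.mpr ⟨i, Finset.mem_univ i, hbi⟩) hneg
        · simpa [hbi] using h0 i hbi
        · have hle : (Finset.univ.filter (fun i => 0 < b i)).inf' hpos (fun i => d i / b i) ≤ d i / b i :=
            Finset.inf'_le (fun i => d i / b i) (by simp only [Finset.mem_filter, Finset.mem_univ, true_and]; exact hbi)
          calc b i * _ ≤ b i * (d i / b i) := by
                exact mul_le_mul_of_nonneg_left hle (le_of_lt hbi)
            _ = d i := by field_simp
      · refine ⟨0, fun i => ?_⟩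
        rcases lt_trichotomy (b i) 0 with hbi | hbi | hbi
        · exact absurd (Finset.filter_nonempty_iff.mpr ⟨i, Finset.mem_univ i, hbi⟩) hneg
        · simpa [hbi] using h0 i hbi
        · exact absurd (Finset.filter_nonempty_iff.mpr ⟨i, Finset.mem_univ i, hbi⟩) hpos

variable {V : Type*} [AddCommGroup V] [Module ℝ V]

def IsPoly (S : Set V) : Prop :=
  ∃ (ι : Type) (_ : Fintype ι) (f : ι → V →ₗ[ℝ] ℝ) (c : ι → ℝ),
    S = {x | ∀ i, f i x ≤ c i}

lemma IsPoly.preimage {W : Type*} [AddCommGroup W] [Module ℝ W] {S : Set V}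
    (h : IsPoly S) (L : W →ₗ[ℝ] V) : IsPoly (L ⁻¹' S) := by
  obtain ⟨ι, hι, f, c, rfl⟩ := h
  exact ⟨ι, hι, fun i => (f i).comp L, c, rfl⟩

lemma IsPoly.image_equiv {W : Type*} [AddCommGroup W] [Module ℝ W] {S : Set V}
    (h : IsPoly S) (e : V ≃ₗ[ℝ] W) : IsPoly (e '' S) := by
  have he : (⇑e '' S) = (e.symm : W →ₗ[ℝ] V) ⁻¹' S := by
    ext w
    constructor
    · rintro ⟨v, hv, rfl⟩; simpa using hv
    · intro hw; exact ⟨e.symm w, hw, by simp⟩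
  rw [he]; exact h.preimage _

/-- Fourier–Motzkin elimination of the first (real) coordinate. -/
lemma IsPoly.elim_fst {S : Set (ℝ × V)} (h : IsPoly S) : IsPoly (Prod.snd '' S) := by
  classical
  obtain ⟨ι, hι, f, c, rfl⟩ := h
  set b : ι → ℝ := fun i => f i (1, 0) with hb
  set g : ι → V →ₗ[ℝ] ℝ := fun i => (f i).comp (LinearMap.inr ℝ ℝ V) with hg
  have hf : ∀ (i : ι) (t : ℝ) (x : V), f i (t, x) = b i * t + g i x := by
    intro i t x
    have hdec : (t, x) = t • ((1 : ℝ), (0 : V)) + ((0 : ℝ), x) := by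
      simp [Prod.ext_iff]
    rw [hdec, map_add, map_smul]
    simp [hb, hg, smul_eq_mul, mul_comm]
  refine ⟨ι ⊕ ι × ι, inferInstance,
    Sum.elim (fun i => if b i = 0 then g i else 0)
      (fun p => if b p.1 < 0 ∧ 0 < b p.2 then b p.2 • g p.1 - b p.1 • g p.2 else 0),
    Sum.elim (fun i => if b i = 0 then c i else 0)
      (fun p => if b p.1 < 0 ∧ 0 < b p.2 then b p.2 * c p.1 - b p.1 * c p.2 else 0),
    ?_⟩
  ext x
  constructor
  · rintro ⟨⟨t, x'⟩, hS, rfl⟩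
    simp only [Set.mem_setOf_eq] at hS ⊢
    rintro (i | ⟨i, j⟩)
    · by_cases hbi : b i = 0
      · have := hS i
        rw [hf i t x'] at this
        simp only [Sum.elim_inl, hbi, if_true]
        simpa [hbi] using this
      · simp [hbi]
    · by_cases hij : b i < 0 ∧ 0 < b j
      · have h1 := hS i
        have h2 := hS j
        rw [hf i t x'] at h1
        rw [hf j t x'] at h2
        show (if b i < 0 ∧ 0 < b j then b j • g i - b i • g j else 0) x' ≤
          (if b i < 0 ∧ 0 < b j then b j * c i - b i * c j else 0)
        rw [if_pos hij, if_pos hij]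
        simp only [LinearMap.sub_apply, LinearMap.smul_apply, smul_eq_mul]
        nlinarith [hij.1, hij.2]
      · simp [hij]
  · intro hx
    simp only [Set.mem_setOf_eq] at hx
    have hmain : ∃ t : ℝ, ∀ i, b i * t ≤ c i - g i x := by
      rw [exists_t_iff b (fun i => c i - g i x)]
      constructor
      · intro i hbi
        have := hx (Sum.inl i)
        simp only [Sum.elim_inl, hbi, if_true] at this
        linarith
      · intro i j hbi hbj
        have := hx (Sum.inr (i, j))
        simp only [Sum.elim_inr] at this
        rw [if_pos (And.intro hbi hbj), if_pos (And.intro hbi hbj)] at this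
        simp only [LinearMap.sub_apply, LinearMap.smul_apply, smul_eq_mul] at this
        nlinarith
    obtain ⟨t, ht⟩ := hmain
    refine ⟨(t, x), ?_, rfl⟩
    simp only [Set.mem_setOf_eq]
    intro i
    rw [hf i t x]
    have := ht i
    linarith

def finSuccLEquiv (k : ℕ) : (Fin (k + 1) → ℝ) ≃ₗ[ℝ] ℝ × (Fin k → ℝ) where
  toFun f := (f 0, fun i => f i.succ)
  invFun p := Fin.cons p.1 p.2
  left_inv f := Fin.cons_self_tail f
  right_inv p := by
    ext i <;> simp
  map_add' f g := rfl
  map_smul' c f := rfl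

lemma IsPoly.elim_pi : ∀ {k : ℕ} {S : Set ((Fin k → ℝ) × V)}, IsPoly S →
    IsPoly (Prod.snd '' S) := by
  intro k
  induction k with
  | zero =>
    intro S hS
    have himg : Prod.snd '' S =
        (LinearMap.prod (0 : V →ₗ[ℝ] (Fin 0 → ℝ)) LinearMap.id) ⁻¹' S := by
      ext x
      constructor
      · rintro ⟨⟨c0, x'⟩, hS', rfl⟩
        have : c0 = 0 := Subsingleton.elim _ _
        subst this
        exact hS'
      · intro hx
        exact ⟨((0 : Fin 0 → ℝ), x), hx, rfl⟩
    rw [himg]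
    exact hS.preimage _
  | succ k ih =>
    intro S hS
    set E : ((Fin (k + 1) → ℝ) × V) ≃ₗ[ℝ] ℝ × ((Fin k → ℝ) × V) :=
      ((finSuccLEquiv k).prodCongr (LinearEquiv.refl ℝ V)).trans
        (LinearEquiv.prodAssoc ℝ ℝ (Fin k → ℝ) V) with hE
    have himg : Prod.snd '' S = Prod.snd '' (Prod.snd '' (⇑E '' S)) := by
      rw [Set.image_image, Set.image_image]
      rfl
    rw [himg]
    exact ih ((hS.image_equiv E).elim_fst)

lemma IsPoly.image {k : ℕ} {ι : Type} [Fintype ι] {P : Set (Fin k → ℝ)}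
    (h : IsPoly P) (L : (Fin k → ℝ) →ₗ[ℝ] (ι → ℝ)) : IsPoly (⇑L '' P) := by
  classical
  obtain ⟨κ, hκ, f, c, hPeq⟩ := h
  have hgraph : IsPoly {p : (Fin k → ℝ) × (ι → ℝ) | p.1 ∈ P ∧ p.2 = L p.1} := by
    refine ⟨κ ⊕ ι ⊕ ι, inferInstance,
      Sum.elim (fun m => (f m).comp (LinearMap.fst ℝ _ _))
        (Sum.elim
          (fun m => (LinearMap.proj (R := ℝ) (φ := fun _ : ι => ℝ) m).comp
              (LinearMap.snd ℝ (Fin k → ℝ) (ι → ℝ)) -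
            ((LinearMap.proj (R := ℝ) (φ := fun _ : ι => ℝ) m).comp L).comp
              (LinearMap.fst ℝ (Fin k → ℝ) (ι → ℝ)))
          (fun m => ((LinearMap.proj (R := ℝ) (φ := fun _ : ι => ℝ) m).comp L).comp
              (LinearMap.fst ℝ (Fin k → ℝ) (ι → ℝ)) -
            (LinearMap.proj (R := ℝ) (φ := fun _ : ι => ℝ) m).comp
              (LinearMap.snd ℝ (Fin k → ℝ) (ι → ℝ)))),
      Sum.elim c 0, ?_⟩
    ext ⟨x, y⟩
    simp only [Set.mem_setOf_eq, hPeq]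
    constructor
    · rintro ⟨hx, rfl⟩
      rintro (m | m | m) <;>
        simp_all [LinearMap.proj]
    · intro hall
      constructor
      · intro m; simpa using hall (Sum.inl m)
      · funext m
        have h1 := hall (Sum.inr (Sum.inl m))
        have h2 := hall (Sum.inr (Sum.inr m))
        simp only [Sum.elim_inr, Sum.elim_inl, LinearMap.sub_apply, LinearMap.comp_apply,
          LinearMap.snd_apply, LinearMap.fst_apply, LinearMap.proj_apply, Pi.zero_apply] at h1 h2
        linarith
  have himg : ⇑L '' P = Prod.snd '' {p : (Fin k → ℝ) × (ι → ℝ) | p.1 ∈ P ∧ p.2 = L p.1} := by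
    ext y
    constructor
    · rintro ⟨x, hx, rfl⟩; exact ⟨(x, L x), ⟨hx, rfl⟩, rfl⟩
    · rintro ⟨⟨x, y'⟩, ⟨hx, hy⟩, rfl⟩; exact ⟨x, hx, hy.symm⟩
  rw [himg]
  exact hgraph.elim_pi

lemma IsPoly.isClosed {ι : Type} [Fintype ι] {S : Set (ι → ℝ)} (h : IsPoly S) :
    IsClosed S := by
  obtain ⟨κ, hκ, f, c, rfl⟩ := h
  have : {x : ι → ℝ | ∀ i, f i x ≤ c i} = ⋂ i, (f i) ⁻¹' (Set.Iic (c i)) := by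
    ext x; simp
  rw [this]
  exact isClosed_iInter fun i =>
    IsClosed.preimage (f i).continuous_of_finiteDimensional isClosed_Iic



lemma isPoly_coneOf' {n : ℕ} {ι : Type} [Fintype ι] (w : ι → Fin n → ℝ) :
    IsPoly (coneOf' w) := by
  classical
  set e := Fintype.equivFin ι with he
  set L : (Fin (Fintype.card ι) → ℝ) →ₗ[ℝ] (Fin n → ℝ) :=
    ∑ j, (LinearMap.proj (R := ℝ) (φ := fun _ : Fin (Fintype.card ι) => ℝ) j).smulRight
      (w (e.symm j)) with hL
  have hLapp : ∀ lam, L lam = ∑ j, lam j • w (e.symm j) := by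
    intro lam
    rw [hL]
    simp [LinearMap.sum_apply]
  have hQ : IsPoly {lam : Fin (Fintype.card ι) → ℝ | ∀ j, -(lam j) ≤ 0} :=
    ⟨Fin (Fintype.card ι), inferInstance,
      fun j => -(LinearMap.proj (R := ℝ) (φ := fun _ : Fin (Fintype.card ι) => ℝ) j),
      0, by ext lam; simp⟩
  have himg : coneOf' w = ⇑L '' {lam : Fin (Fintype.card ι) → ℝ | ∀ j, -(lam j) ≤ 0} := by
    ext x
    constructor
    · rintro ⟨lam, hlam, rfl⟩
      refine ⟨fun j => lam (e.symm j), fun j => by simpa using hlam (e.symm j), ?_⟩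
      rw [hLapp]
      exact Equiv.sum_comp e.symm (fun l => lam l • w l)
    · rintro ⟨lam, hlam, rfl⟩
      refine ⟨fun l => lam (e l), fun l => by simpa using hlam (e l), ?_⟩
      rw [hLapp]
      rw [← Equiv.sum_comp e.symm (fun l => lam (e l) • w (l))]
      simp
  rw [himg]
  exact hQ.image L

/-- Farkas' lemma: the polar of `{v | ∀ l, ⟨w l, v⟩ ≤ 0}` is the cone generated
by the `w l`. -/
lemma farkas {n : ℕ} {ι : Type} [Fintype ι] (w : ι → Fin n → ℝ) :
    polarCone {v | ∀ l, dotp (w l) v ≤ 0} = coneOf' w := by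
  classical
  obtain ⟨κ, hκ, f, c, hC⟩ := isPoly_coneOf' w
  have hC0 : (0 : Fin n → ℝ) ∈ coneOf' w := ⟨0, fun l => le_refl 0, by simp⟩
  have hCsmul : ∀ x ∈ coneOf' w, ∀ t : ℝ, 0 ≤ t → t • x ∈ coneOf' w := by
    rintro x ⟨lam, hlam, rfl⟩ t ht
    refine ⟨fun l => t * lam l, fun l => mul_nonneg ht (hlam l), ?_⟩
    rw [Finset.smul_sum]
    exact Finset.sum_congr rfl fun l _ => by rw [smul_smul]
  have hc0 : ∀ m, 0 ≤ c m := by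
    intro m
    have h0 : (0 : Fin n → ℝ) ∈ {x | ∀ m, f m x ≤ c m} := hC ▸ hC0
    simpa using h0 m
  have hCcone : coneOf' w = {x | ∀ m, f m x ≤ 0} := by
    ext x
    constructor
    · intro hx m
      by_contra hpos
      push_neg at hpos
      set t := (c m + 1) / f m x with ht
      have htpos : 0 ≤ t := div_nonneg (by linarith [hc0 m]) (le_of_lt hpos)
      have hmem : t • x ∈ coneOf' w := hCsmul x hx t htpos
      have : f m (t • x) ≤ c m := by
        have := (hC ▸ hmem : t • x ∈ {x | ∀ m, f m x ≤ c m}) m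
        exact this
      rw [map_smul, smul_eq_mul, ht, div_mul_cancel₀ _ (ne_of_gt hpos)] at this
      linarith
    · intro hx
      rw [hC]
      intro m
      exact le_trans (hx m) (hc0 m)
  set z : κ → Fin n → ℝ := fun m => fun j => f m (Pi.single (M := fun _ : Fin n => ℝ) j 1) with hz
  have hfz : ∀ m x, f m x = dotp (z m) x := by
    intro m x
    have hx : x = ∑ j, Pi.single (M := fun _ : Fin n => ℝ) j (x j) := by
      rw [Finset.univ_sum_single]
    conv_lhs => rw [hx]
    rw [map_sum]
    unfold dotp
    refine Finset.sum_congr rfl fun j _ => ?_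
    have hsingle : Pi.single (M := fun _ : Fin n => ℝ) j (x j)
        = x j • Pi.single (M := fun _ : Fin n => ℝ) j (1 : ℝ) := by
      rw [← Pi.single_smul, smul_eq_mul, mul_one]
    rw [hsingle, map_smul, smul_eq_mul, hz, mul_comm]
  have hwC : ∀ l, w l ∈ coneOf' w := by
    intro l
    refine ⟨fun l' => if l' = l then 1 else 0, fun l' => by positivity, ?_⟩
    symm
    simp [ite_smul]
  ext x
  constructor
  · intro hx
    rw [hCcone]
    intro m
    have hzσ : z m ∈ {v | ∀ l, dotp (w l) v ≤ 0} := by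
      intro l
      rw [dotp_comm, ← hfz]
      have := (hCcone ▸ hwC l) m
      exact this
    have := hx (z m) hzσ
    rw [hfz, dotp_comm]
    exact this
  · rintro ⟨lam, hlam, rfl⟩ v hv
    rw [dotp_sum_left]
    refine Finset.sum_nonpos fun l _ => ?_
    rw [dotp_smul_left]
    exact mul_nonpos_iff.mpr (Or.inl ⟨hlam l, hv l⟩)


lemma dotp_sum_right {n : ℕ} {ι : Type*} (s : Finset ι) (v : Fin n → ℝ)
    (f : ι → Fin n → ℝ) : dotp v (∑ i ∈ s, f i) = ∑ i ∈ s, dotp v (f i) := by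
  rw [dotp_comm, dotp_sum_left]
  exact Finset.sum_congr rfl fun i _ => dotp_comm _ _

/-- From a strict approximation by `1/(k+1)` deduce convergence. -/
lemma tendsto_of_abs_lt {g : ℕ → ℝ} {y : ℝ}
    (h : ∀ k : ℕ, |g k - y| < 1 / ((k : ℝ) + 1)) :
    Filter.Tendsto g Filter.atTop (nhds y) := by
  rw [tendsto_iff_dist_tendsto_zero]
  apply squeeze_zero (fun k => dist_nonneg) (fun k => ?_)
    tendsto_one_div_add_atTop_nhds_zero_nat
  rw [Real.dist_eq]
  exact le_of_lt (h k)

lemma tendsto_coe_bot {c d : ℝ} (hd : d < 0) :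
    Filter.Tendsto (fun k : ℕ => ((c + (k : ℝ) * d : ℝ) : EReal))
      Filter.atTop (nhds ⊥) := by
  have h2 : Filter.Tendsto (fun k : ℕ => (k : ℝ) * d) Filter.atTop Filter.atBot :=
    Filter.Tendsto.atTop_mul_const_of_neg hd tendsto_natCast_atTop_atTop
  have h3 : Filter.Tendsto (fun k : ℕ => c + (k : ℝ) * d) Filter.atTop Filter.atBot :=
    Filter.tendsto_atBot_add_const_left _ c h2
  rw [EReal.tendsto_nhds_bot_iff_real]
  intro x
  filter_upwards [h3.eventually (Filter.eventually_lt_atBot x)] with k hk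
  exact EReal.coe_lt_coe_iff.mpr hk

/-- An "interior vector" of the face `τ` of `σ`: `w ∈ τ` such that a functional of
`σ∨` vanishes on `w` iff it vanishes on all of `τ`; moreover functionals of `σ∨`
vanishing on `τ` have a representation supported on the constraints vanishing
on `τ`. -/
lemma interior_rep {n r : ℕ} (u : Fin r → Fin n → ℝ) {σ τ : Set (Fin n → ℝ)}
    (hσ : σ = {v | ∀ i, dotp (u i) v ≤ 0}) (hτσ : τ ⊆ σ)
    (h0 : (0 : Fin n → ℝ) ∈ τ) (hadd : ∀ x ∈ τ, ∀ y ∈ τ, x + y ∈ τ) :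
    ∃ w ∈ τ, (∀ x ∈ polarCone σ, ((∀ y ∈ τ, dotp x y = 0) ↔ dotp x w = 0)) ∧
      (∀ x ∈ polarCone σ, (∀ y ∈ τ, dotp x y = 0) →
        ∃ lam : Fin r → ℝ, (∀ i, 0 ≤ lam i) ∧
          (∀ i, ¬(∀ y ∈ τ, dotp (u i) y = 0) → lam i = 0) ∧
          x = ∑ i, lam i • u i) := by
  classical
  have hfark : ∀ x ∈ polarCone σ, ∃ lam : Fin r → ℝ, (∀ i, 0 ≤ lam i) ∧
      x = ∑ i, lam i • u i := by
    intro x hx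
    rw [hσ, farkas u] at hx
    exact hx
  have hτneg : ∀ y ∈ τ, ∀ i, dotp (u i) y ≤ 0 := by
    intro y hy i
    have := hτσ hy
    rw [hσ] at this
    exact this i
  have hwit : ∀ i : Fin r, ∃ x, x ∈ τ ∧ (¬(∀ y ∈ τ, dotp (u i) y = 0) →
      dotp (u i) x ≠ 0) := by
    intro i
    by_cases hK : ∀ y ∈ τ, dotp (u i) y = 0
    · exact ⟨0, h0, fun h => absurd hK h⟩
    · push_neg at hK
      obtain ⟨x, hxτ, hxne⟩ := hK
      exact ⟨x, hxτ, fun _ => hxne⟩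
  choose wit hwitτ hwitne using hwit
  set s : Finset (Fin r) :=
    Finset.univ.filter (fun i => ¬(∀ y ∈ τ, dotp (u i) y = 0)) with hs
  have hsummem : ∀ t : Finset (Fin r), (∑ i ∈ t, wit i) ∈ τ := by
    intro t
    induction t using Finset.induction with
    | empty => simpa using h0
    | insert i t hnotmem ih =>
      rw [Finset.sum_insert hnotmem]
      exact hadd _ (hwitτ i) _ ih
  refine ⟨∑ i ∈ s, wit i, hsummem s, ?_, ?_⟩
  · intro x hx
    constructor
    · intro hperp
      exact hperp _ (hsummem s)
    · intro hw y hy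
      obtain ⟨lam, hlam, rfl⟩ := hfark x hx
      have hterm : ∀ i, lam i * dotp (u i) (∑ l ∈ s, wit l) ≤ 0 := fun i =>
        mul_nonpos_iff.mpr (Or.inl ⟨hlam i, hτneg _ (hsummem s) i⟩)
      rw [dotp_sum_left] at hw
      have hw' : ∑ i, lam i * dotp (u i) (∑ l ∈ s, wit l) = 0 := by
        rw [← hw]
        exact Finset.sum_congr rfl fun i _ => (dotp_smul_left _ _ _).symm
      have hzero : ∀ i ∈ Finset.univ, lam i * dotp (u i) (∑ l ∈ s, wit l) = 0 :=
        (Finset.sum_eq_zero_iff_of_nonpos fun i _ => hterm i).mp hw'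
      have hlam0 : ∀ i, ¬(∀ y ∈ τ, dotp (u i) y = 0) → lam i = 0 := by
        intro i hKi
        have hstrict : dotp (u i) (∑ l ∈ s, wit l) < 0 := by
          rw [dotp_sum_right]
          have hlt : ∑ l ∈ s, dotp (u i) (wit l) < ∑ l ∈ s, (0 : ℝ) := by
            refine Finset.sum_lt_sum (fun l _ => hτneg _ (hwitτ l) i) ?_
            refine ⟨i, ?_, lt_of_le_of_ne (hτneg _ (hwitτ i) i) (hwitne i hKi)⟩
            rw [hs]
            simp only [Finset.mem_filter, Finset.mem_univ, true_and]
            exact hKi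
          simpa using hlt
        have := hzero i (Finset.mem_univ i)
        rcases mul_eq_zero.mp this with h | h
        · exact h
        · exact absurd h (ne_of_lt hstrict)
      rw [dotp_sum_left]
      refine Finset.sum_eq_zero fun i _ => ?_
      rw [dotp_smul_left]
      by_cases hKi : ∀ y ∈ τ, dotp (u i) y = 0
      · rw [hKi y hy, mul_zero]
      · rw [hlam0 i hKi, zero_mul]
  · intro x hx hperp
    obtain ⟨lam, hlam, rfl⟩ := hfark x hx
    refine ⟨lam, hlam, ?_, rfl⟩
    -- same argument as above: lam vanishes off the touching constraints
    have hw : dotp (∑ i, lam i • u i) (∑ l ∈ s, wit l) = 0 :=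
      hperp _ (hsummem s)
    have hterm : ∀ i, lam i * dotp (u i) (∑ l ∈ s, wit l) ≤ 0 := fun i =>
      mul_nonpos_iff.mpr (Or.inl ⟨hlam i, hτneg _ (hsummem s) i⟩)
    rw [dotp_sum_left] at hw
    have hw' : ∑ i, lam i * dotp (u i) (∑ l ∈ s, wit l) = 0 := by
      rw [← hw]
      exact Finset.sum_congr rfl fun i _ => (dotp_smul_left _ _ _).symm
    have hzero : ∀ i ∈ Finset.univ, lam i * dotp (u i) (∑ l ∈ s, wit l) = 0 :=
      (Finset.sum_eq_zero_iff_of_nonpos fun i _ => hterm i).mp hw'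
    intro i hKi
    have hstrict : dotp (u i) (∑ l ∈ s, wit l) < 0 := by
      rw [dotp_sum_right]
      have hlt : ∑ l ∈ s, dotp (u i) (wit l) < ∑ l ∈ s, (0 : ℝ) := by
        refine Finset.sum_lt_sum (fun l _ => hτneg _ (hwitτ l) i) ?_
        refine ⟨i, ?_, lt_of_le_of_ne (hτneg _ (hwitτ i) i) (hwitne i hKi)⟩
        rw [hs]
        simp only [Finset.mem_filter, Finset.mem_univ, true_and]
        exact hKi
      simpa using hlt
    have := hzero i (Finset.mem_univ i)
    rcases mul_eq_zero.mp this with h | h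
    · exact h
    · exact absurd h (ne_of_lt hstrict)

end Aux

/-- Let `P ⊆ ℝⁿ` be a pointed polyhedron with recession cone
`σ = Recc(P)`, and let `P̄` be the closure of `j(P)` in `N_ℝ(σ)`.  Then
`P̄ = ⋃_{τ face of σ} ι(π_τ(P))` and the sets `ι(π_τ(P))` for distinct faces `τ` are
pairwise disjoint. -/
theorem stmt4 {n r : ℕ} (u : Fin r → (Fin n → ℝ)) (a : Fin r → ℝ)
    (P σ : Set (Fin n → ℝ))
    (hP : P = {v | ∀ i, dotp (u i) v ≤ a i})
    (hσ : σ = {v | ∀ i, dotp (u i) v ≤ 0})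
    (hpt : IsPointed σ) :
    closure ((fun φ : ↥(NRc σ) => (φ : ↥(polarCone σ) → EReal)) ⁻¹' (jmap σ '' P)) =
      (⋃ τ : {τ : Set (Fin n → ℝ) // IsFace σ τ},
        (fun φ : ↥(NRc σ) => (φ : ↥(polarCone σ) → EReal)) ⁻¹'
          (iotaFace σ (τ : Set (Fin n → ℝ)) '' P)) ∧
    Pairwise (fun τ τ' : {τ : Set (Fin n → ℝ) // IsFace σ τ} =>
      Disjoint (iotaFace σ (τ : Set (Fin n → ℝ)) '' P)
        (iotaFace σ (τ' : Set (Fin n → ℝ)) '' P)) := by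
  classical
  have hσiff : ∀ v, v ∈ σ ↔ ∀ i, dotp (u i) v ≤ 0 := fun v => by
    rw [hσ]; exact Iff.rfl
  have hPiff : ∀ v, v ∈ P ↔ ∀ i, dotp (u i) v ≤ a i := fun v => by
    rw [hP]; exact Iff.rfl
  have hui : ∀ i, u i ∈ polarCone σ := by
    intro i v hv
    exact (hσiff v).mp hv i
  have hfark : ∀ x ∈ polarCone σ, ∃ lam : Fin r → ℝ, (∀ i, 0 ≤ lam i) ∧
      x = ∑ i, lam i • u i := by
    intro x hx
    rw [hσ, Aux.farkas u] at hx
    exact hx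
  have hjN : ∀ x, jmap σ x ∈ NRc σ := by
    intro x
    refine ⟨fun u' => EReal.coe_ne_top _, ?_, ?_⟩
    · intro u1 u2 h
      show ((dotp (u1.val + u2.val) x : ℝ) : EReal) = _
      rw [Aux.dotp_add_left, EReal.coe_add]
      rfl
    · intro cc hc u1 h
      show ((dotp (cc • u1.val) x : ℝ) : EReal) = _
      rw [Aux.dotp_smul_left, EReal.coe_mul]
      rfl
  refine ⟨Set.Subset.antisymm ?_ ?_, ?_⟩
  · -- hard inclusion
    intro φ hφ
    -- Step 0: extraction of approximating elements of P from the closure hypothesis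
    have hext : ∀ (T : Finset ↥(polarCone σ)) (k : ℕ), ∃ p, p ∈ P ∧ ∀ u' ∈ T,
        (φ.val u' = ⊥ → dotp u'.val p < -(k : ℝ)) ∧
        (φ.val u' ≠ ⊥ →
          |dotp u'.val p - (φ.val u').toReal| < 1 / ((k : ℝ) + 1)) := by
      intro T k
      have hkpos : (0 : ℝ) < 1 / ((k : ℝ) + 1) := by positivity
      set N : ↥(polarCone σ) → Set EReal := fun u' =>
        if φ.val u' = ⊥ then Set.Iio ((-(k : ℝ) : ℝ) : EReal)
        else Set.Ioo (((φ.val u').toReal - 1 / ((k : ℝ) + 1) : ℝ) : EReal)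
          (((φ.val u').toReal + 1 / ((k : ℝ) + 1) : ℝ) : EReal) with hN
      have hOopen : IsOpen (⋂ u' ∈ T, (fun ψ : ↥(NRc σ) => ψ.val u') ⁻¹' N u') := by
        refine isOpen_biInter_finset fun u' _ => ?_
        refine IsOpen.preimage ((continuous_apply u').comp continuous_subtype_val) ?_
        rw [hN]
        dsimp only
        split_ifs
        · exact isOpen_Iio
        · exact isOpen_Ioo
      have hφO : φ ∈ ⋂ u' ∈ T, (fun ψ : ↥(NRc σ) => ψ.val u') ⁻¹' N u' := by
        refine Set.mem_iInter₂.mpr fun u' _ => ?_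
        show φ.val u' ∈ N u'
        rw [hN]
        dsimp only
        split_ifs with hb
        · rw [Set.mem_Iio, hb]
          exact EReal.bot_lt_coe _
        · have hcoe : ((φ.val u').toReal : EReal) = φ.val u' :=
            EReal.coe_toReal (φ.2.1 u') hb
          rw [Set.mem_Ioo]
          constructor
          · calc (((φ.val u').toReal - 1 / ((k : ℝ) + 1) : ℝ) : EReal)
                < (((φ.val u').toReal : ℝ) : EReal) :=
                  EReal.coe_lt_coe_iff.mpr (by linarith)
              _ = φ.val u' := hcoe
          · calc φ.val u' = (((φ.val u').toReal : ℝ) : EReal) := hcoe.symm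
              _ < (((φ.val u').toReal + 1 / ((k : ℝ) + 1) : ℝ) : EReal) :=
                  EReal.coe_lt_coe_iff.mpr (by linarith)
      obtain ⟨ψ, hψO, hψS⟩ := mem_closure_iff.mp hφ _ hOopen hφO
      obtain ⟨p, hpP, hjp0⟩ := hψS
      have hjp : jmap σ p = ψ.val := hjp0
      refine ⟨p, hpP, fun u' hu' => ?_⟩
      have hmem : ψ.val u' ∈ N u' := Set.mem_iInter₂.mp hψO u' hu'
      rw [← hjp] at hmem
      have hjval : jmap σ p u' = ((dotp u'.val p : ℝ) : EReal) := rfl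
      rw [hjval, hN] at hmem
      dsimp only at hmem
      constructor
      · intro hb
        rw [if_pos hb, Set.mem_Iio] at hmem
        exact EReal.coe_lt_coe_iff.mp hmem
      · intro hb
        rw [if_neg hb, Set.mem_Ioo] at hmem
        obtain ⟨h1, h2⟩ := hmem
        rw [EReal.coe_lt_coe_iff] at h1 h2
        rw [abs_sub_lt_iff]
        exact ⟨by linarith, by linarith⟩
    -- Step 1: basic data
    set US : Fin r → ↥(polarCone σ) := fun i => ⟨u i, hui i⟩ with hUS
    have hUSval : ∀ i, (US i).val = u i := fun i => by rw [hUS]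
    set I : Finset (Fin r) := Finset.univ.filter (fun i => φ.val (US i) ≠ ⊥) with hI
    set Y : Fin r → ℝ := fun i => (φ.val (US i)).toReal with hY
    set Tall : Finset ↥(polarCone σ) := Finset.univ.image US with hTall
    have hUSmem : ∀ i, US i ∈ Tall := fun i => by
      rw [hTall]; exact Finset.mem_image_of_mem US (Finset.mem_univ i)
    have hUSne : ∀ i ∈ I, φ.val (US i) ≠ ⊥ := by
      intro i hi
      rw [hI] at hi
      simpa using hi
    have hUSbot : ∀ i, i ∉ I → φ.val (US i) = ⊥ := by
      intro i hi
      by_contra hbne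
      exact hi (by rw [hI]; simp only [Finset.mem_filter, Finset.mem_univ, true_and]; exact hbne)
    -- Step 2: the face τ
    set τ : Set (Fin n → ℝ) := σ ∩ {v | ∀ i ∈ I, dotp (u i) v = 0} with hτ
    have hτσ : τ ⊆ σ := by rw [hτ]; exact Set.inter_subset_left
    have hτmem : ∀ v, v ∈ τ ↔ (v ∈ σ ∧ ∀ i ∈ I, dotp (u i) v = 0) := by
      intro v; rw [hτ]; exact Iff.rfl
    have hIperp : ∀ i ∈ I, ∀ y ∈ τ, dotp (u i) y = 0 := fun i hi y hy =>
      ((hτmem y).mp hy).2 i hi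
    have h0τ : (0 : Fin n → ℝ) ∈ τ := (hτmem 0).mpr
      ⟨(hσiff 0).mpr (fun i => by rw [Aux.dotp_zero_right]),
        fun i _ => Aux.dotp_zero_right _⟩
    have hτadd : ∀ x ∈ τ, ∀ y ∈ τ, x + y ∈ τ := by
      intro x hx y hy
      rw [hτmem] at hx hy ⊢
      refine ⟨(hσiff _).mpr fun i => ?_, fun i hi => ?_⟩
      · rw [Aux.dotp_add_right]
        exact add_nonpos ((hσiff x).mp hx.1 i) ((hσiff y).mp hy.1 i)
      · rw [Aux.dotp_add_right, hx.2 i hi, hy.2 i hi, add_zero]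
    have hfaceτ : IsFace σ τ := by
      refine ⟨∑ i ∈ I, u i, ?_, ?_⟩
      · intro v hv
        rw [Aux.dotp_sum_left]
        exact Finset.sum_nonpos fun i _ => (hσiff v).mp hv i
      · ext v
        rw [hτmem v]
        simp only [Set.mem_inter_iff, Set.mem_setOf_eq]
        constructor
        · rintro ⟨hvσ, hperp⟩
          refine ⟨hvσ, ?_⟩
          rw [Aux.dotp_sum_left]
          exact Finset.sum_eq_zero fun i hi => hperp i hi
        · rintro ⟨hvσ, hsum⟩
          refine ⟨hvσ, fun i hi => ?_⟩
          rw [Aux.dotp_sum_left] at hsum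
          exact (Finset.sum_eq_zero_iff_of_nonpos
            fun l _ => (hσiff v).mp hvσ l).mp hsum i hi
    -- Step 3: the global approximating sequence
    choose pseq hpseqP hpseq using fun k => hext Tall k
    have hbot : ∀ i, i ∉ I → ∀ k : ℕ, dotp (u i) (pseq k) < -(k : ℝ) := by
      intro i hi k
      have := (hpseq k (US i) (hUSmem i)).1 (hUSbot i hi)
      rwa [hUSval i] at this
    have hwin : ∀ i ∈ I, ∀ k : ℕ, |dotp (u i) (pseq k) - Y i| < 1 / ((k : ℝ) + 1) := by
      intro i hi k
      have := (hpseq k (US i) (hUSmem i)).2 (hUSne i hi)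
      rwa [hUSval i] at this
    -- Step 4: the limit point vs ∈ P via closedness of linear images of polyhedra
    have hPpoly : Aux.IsPoly P := ⟨Fin r, inferInstance, fun i => Aux.dotLin (u i), a, by
      rw [hP]
      rfl⟩
    set LI : (Fin n → ℝ) →ₗ[ℝ] ({i // i ∈ I} → ℝ) :=
      LinearMap.pi (fun i => Aux.dotLin (u i.val)) with hLI
    have hLIval : ∀ v (i : {i // i ∈ I}), LI v i = dotp (u i.val) v := by
      intro v i
      rw [hLI]
      rfl
    have hclosed : IsClosed (⇑LI '' P) := (hPpoly.image LI).isClosed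
    have hYlim : Filter.Tendsto (fun k => LI (pseq k)) Filter.atTop
        (𝓝 (fun i : {i // i ∈ I} => Y i.val)) := by
      rw [tendsto_pi_nhds]
      intro i
      exact Filter.Tendsto.congr (fun k => (hLIval (pseq k) i).symm)
        (Aux.tendsto_of_abs_lt (fun k => hwin i.val i.2 k))
    have hYmem : (fun i : {i // i ∈ I} => Y i.val) ∈ ⇑LI '' P := by
      rw [← hclosed.closure_eq]
      exact mem_closure_of_tendsto hYlim
        (Filter.Eventually.of_forall fun k => ⟨pseq k, hpseqP k, rfl⟩)
    obtain ⟨vs, hvsP, hvseq⟩ := hYmem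
    have hvsI : ∀ i, (hi : i ∈ I) → dotp (u i) vs = Y i := by
      intro i hi
      have := congrFun hvseq ⟨i, hi⟩
      rwa [hLIval vs ⟨i, hi⟩] at this
    -- Step 5: every constraint vanishing on τ belongs to I
    have hKI : ∀ j, (∀ y ∈ τ, dotp (u j) y = 0) → j ∈ I := by
      intro j hjperp
      by_contra hjI
      set w3 : (Fin r ⊕ Fin r) → (Fin n → ℝ) :=
        Sum.elim u (fun i => if i ∈ I then -(u i) else 0) with hw3
      have hτ3 : τ = {v | ∀ l, dotp (w3 l) v ≤ 0} := by
        ext v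
        rw [hτmem v]
        simp only [Set.mem_setOf_eq]
        constructor
        · rintro ⟨hvσ, hperp⟩ l
          rcases l with i | i
          · rw [hw3]
            exact (hσiff v).mp hvσ i
          · rw [hw3]
            dsimp only [Sum.elim_inr]
            by_cases hiI : i ∈ I
            · rw [if_pos hiI, Aux.dotp_neg_left, hperp i hiI]
              norm_num
            · rw [if_neg hiI, Aux.dotp_zero_left]
        · intro hall
          have hvσ : v ∈ σ := (hσiff v).mpr fun i => by
            have := hall (Sum.inl i)
            rwa [hw3] at this
          refine ⟨hvσ, fun i hi => ?_⟩
          have h1 : dotp (u i) v ≤ 0 := (hσiff v).mp hvσ i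
          have h2 := hall (Sum.inr i)
          rw [hw3] at h2
          dsimp only [Sum.elim_inr] at h2
          rw [if_pos hi, Aux.dotp_neg_left] at h2
          linarith
      have hjrep : -(u j) ∈ Aux.coneOf' w3 := by
        rw [← Aux.farkas w3]
        intro y hy
        rw [Aux.dotp_neg_left]
        have hyτ : y ∈ τ := by rw [hτ3]; exact hy
        rw [hjperp y hyτ]
        norm_num
      obtain ⟨lam, hlam, hlameq⟩ := hjrep
      set b3 : (Fin r ⊕ Fin r) → ℝ :=
        Sum.elim a (fun i => if i ∈ I then 1 - Y i else 0) with hb3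
      set C : ℝ := ∑ l, lam l * b3 l with hC
      set k0 : ℕ := ⌈C⌉₊ + 1 with hk0
      have hwink : ∀ i ∈ I, |dotp (u i) (pseq k0) - Y i| ≤ 1 := by
        intro i hi
        refine le_trans (le_of_lt (hwin i hi k0)) ?_
        rw [div_le_one (by positivity)]
        have := Nat.cast_nonneg (α := ℝ) k0
        linarith
      have hble : ∀ l, dotp (w3 l) (pseq k0) ≤ b3 l := by
        intro l
        rcases l with i | i
        · rw [hw3, hb3]
          exact (hPiff _).mp (hpseqP k0) i
        · rw [hw3, hb3]
          dsimp only [Sum.elim_inr]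
          by_cases hiI : i ∈ I
          · rw [if_pos hiI, if_pos hiI, Aux.dotp_neg_left]
            have := abs_le.mp (hwink i hiI)
            linarith [this.1]
          · rw [if_neg hiI, if_neg hiI, Aux.dotp_zero_left]
      have hlow : -C ≤ dotp (u j) (pseq k0) := by
        have h1 : dotp (-(u j)) (pseq k0) = ∑ l, lam l * dotp (w3 l) (pseq k0) := by
          rw [hlameq, Aux.dotp_sum_left]
          exact Finset.sum_congr rfl fun l _ => Aux.dotp_smul_left _ _ _
        have h2 : ∑ l, lam l * dotp (w3 l) (pseq k0) ≤ C := by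
          rw [hC]
          exact Finset.sum_le_sum fun l _ =>
            mul_le_mul_of_nonneg_left (hble l) (hlam l)
        rw [Aux.dotp_neg_left] at h1
        linarith [h1 ▸ h2]
      have hhigh := hbot j hjI k0
      have hCk : C < (k0 : ℝ) := by
        rw [hk0]
        push_cast
        have := Nat.le_ceil C
        linarith
      linarith
    -- Step 6: support of representations of non-bottom functionals
    have hsupp : ∀ u' : ↥(polarCone σ), φ.val u' ≠ ⊥ →
        ∀ lam : Fin r → ℝ, (∀ i, 0 ≤ lam i) → u'.val = ∑ i, lam i • u i →
        ∀ j, j ∉ I → lam j = 0 := by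
      intro u' hne lam hlam hrep j hjI
      by_contra hlj0
      have hljpos : 0 < lam j := lt_of_le_of_ne (hlam j) (Ne.symm hlj0)
      set t := (φ.val u').toReal with ht
      set B : ℝ := ∑ i ∈ Finset.univ.erase j, lam i * a i with hB
      set k1 : ℕ := ⌈(B - t + 1) / lam j⌉₊ + 1 with hk1
      obtain ⟨q, hqP, hq⟩ := hext (insert u' Tall) k1
      have hqu' := (hq u' (Finset.mem_insert_self _ _)).2 hne
      have hqj0 := (hq (US j) (Finset.mem_insert_of_mem (hUSmem j))).1 (hUSbot j hjI)
      rw [hUSval j] at hqj0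
      have hdq : dotp u'.val q = ∑ i, lam i * dotp (u i) q := by
        rw [hrep, Aux.dotp_sum_left]
        exact Finset.sum_congr rfl fun i _ => Aux.dotp_smul_left _ _ _
      have hbound : ∑ i, lam i * dotp (u i) q ≤ B + lam j * (-(k1 : ℝ)) := by
        have hsplit : ∑ i, lam i * dotp (u i) q =
            lam j * dotp (u j) q + ∑ i ∈ Finset.univ.erase j, lam i * dotp (u i) q :=
          (Finset.add_sum_erase _ _ (Finset.mem_univ j)).symm
        rw [hsplit]
        have h1 : lam j * dotp (u j) q ≤ lam j * (-(k1 : ℝ)) :=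
          mul_le_mul_of_nonneg_left (le_of_lt hqj0) (hlam j)
        have h2 : ∑ i ∈ Finset.univ.erase j, lam i * dotp (u i) q ≤ B := by
          rw [hB]
          exact Finset.sum_le_sum fun i _ =>
            mul_le_mul_of_nonneg_left ((hPiff q).mp hqP i) (hlam i)
        linarith
      have hlowt : t - 1 < dotp u'.val q := by
        have habs := abs_sub_lt_iff.mp hqu'
        have hle1 : 1 / ((k1 : ℝ) + 1) ≤ 1 := by
          rw [div_le_one (by positivity)]
          linarith [Nat.cast_nonneg (α := ℝ) k1]
        linarith [habs.2]
      have hk1big : B - t + 1 ≤ lam j * (k1 : ℝ) := by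
        have hceil := Nat.le_ceil ((B - t + 1) / lam j)
        have hdiv : (B - t + 1) / lam j ≤ (k1 : ℝ) := by
          rw [hk1]
          push_cast
          linarith
        calc B - t + 1 = ((B - t + 1) / lam j) * lam j := by field_simp
          _ ≤ (k1 : ℝ) * lam j := mul_le_mul_of_nonneg_right hdiv (hlam j)
          _ = lam j * (k1 : ℝ) := mul_comm _ _
      rw [hdq] at hlowt
      linarith
    -- Step 7: interior vector and the value identity
    obtain ⟨w, hwτ, hwiff, hwrep⟩ := Aux.interior_rep u hσ hτσ h0τ hτadd
    have hval : ∀ u' : ↥(polarCone σ), φ.val u' = iotaFace σ τ vs u' := by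
      intro u'
      by_cases hcond : ∀ y ∈ τ, dotp u'.val y = 0
      · obtain ⟨lam, hlam, hlam0, hrep⟩ := hwrep u'.val u'.2 hcond
        have hlamI : ∀ i, i ∉ I → lam i = 0 := fun i hi =>
          hlam0 i (fun hK => hi (hKI i hK))
        have hneb : φ.val u' ≠ ⊥ := by
          intro hbot'
          set D : ℝ := ∑ i, (if i ∈ I then lam i * (Y i - 1) else 0) with hD
          set k2 : ℕ := ⌈-D⌉₊ + 1 with hk2
          obtain ⟨q, hqP, hq⟩ := hext (insert u' Tall) k2
          have hqu' := (hq u' (Finset.mem_insert_self _ _)).1 hbot'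
          have hlowD : D ≤ dotp u'.val q := by
            have hdq : dotp u'.val q = ∑ i, lam i * dotp (u i) q := by
              rw [hrep, Aux.dotp_sum_left]
              exact Finset.sum_congr rfl fun i _ => Aux.dotp_smul_left _ _ _
            rw [hdq, hD]
            refine Finset.sum_le_sum fun i _ => ?_
            by_cases hiI : i ∈ I
            · rw [if_pos hiI]
              have hwini := (hq (US i) (Finset.mem_insert_of_mem (hUSmem i))).2
                (hUSne i hiI)
              rw [hUSval i] at hwini
              have habs := abs_sub_lt_iff.mp hwini
              have hle1 : 1 / ((k2 : ℝ) + 1) ≤ 1 := by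
                rw [div_le_one (by positivity)]
                linarith [Nat.cast_nonneg (α := ℝ) k2]
              have h1 : Y i - 1 ≤ dotp (u i) q := by linarith [habs.2]
              exact mul_le_mul_of_nonneg_left h1 (hlam i)
            · rw [if_neg hiI, hlamI i hiI, zero_mul]
          have hDk : -(k2 : ℝ) < D := by
            have := Nat.le_ceil (-D)
            rw [hk2]
            push_cast
            linarith
          linarith
        set t := (φ.val u').toReal with ht
        choose qs hqsP hqs using fun k => hext (insert u' Tall) k
        have h1 : Filter.Tendsto (fun k => dotp u'.val (qs k)) Filter.atTop (𝓝 t) :=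
          Aux.tendsto_of_abs_lt
            (fun k => (hqs k u' (Finset.mem_insert_self _ _)).2 hneb)
        have h2 : Filter.Tendsto (fun k => dotp u'.val (qs k)) Filter.atTop
            (𝓝 (dotp u'.val vs)) := by
          have hdqs : ∀ k, dotp u'.val (qs k) = ∑ i, lam i * dotp (u i) (qs k) := by
            intro k
            rw [hrep, Aux.dotp_sum_left]
            exact Finset.sum_congr rfl fun i _ => Aux.dotp_smul_left _ _ _
          have htarget : dotp u'.val vs = ∑ i, (if i ∈ I then lam i * Y i else 0) := by
            rw [hrep, Aux.dotp_sum_left]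
            refine Finset.sum_congr rfl fun i _ => ?_
            rw [Aux.dotp_smul_left]
            by_cases hiI : i ∈ I
            · rw [if_pos hiI, hvsI i hiI]
            · rw [if_neg hiI, hlamI i hiI, zero_mul]
          rw [htarget]
          refine Filter.Tendsto.congr (fun k => (hdqs k).symm) ?_
          refine tendsto_finset_sum _ fun i _ => ?_
          by_cases hiI : i ∈ I
          · rw [if_pos hiI]
            have hti : Filter.Tendsto (fun k => dotp (u i) (qs k)) Filter.atTop
                (𝓝 (Y i)) := by
              refine Aux.tendsto_of_abs_lt (fun k => ?_)
              have := (hqs k (US i) (Finset.mem_insert_of_mem (hUSmem i))).2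
                (hUSne i hiI)
              rwa [hUSval i] at this
            exact hti.const_mul (lam i)
          · rw [if_neg hiI]
            refine Filter.Tendsto.congr (fun k => ?_) tendsto_const_nhds
            rw [hlamI i hiI, zero_mul]
        have hteq : t = dotp u'.val vs := tendsto_nhds_unique h1 h2
        rw [show iotaFace σ τ vs u' = ((dotp u'.val vs : ℝ) : EReal) from if_pos hcond]
        rw [← hteq, ht]
        exact (EReal.coe_toReal (φ.2.1 u') hneb).symm
      · rw [show iotaFace σ τ vs u' = (⊥ : EReal) from if_neg hcond]
        by_contra hneb
        obtain ⟨lam, hlam, hrep⟩ := hfark u'.val u'.2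
        have hlamI := hsupp u' hneb lam hlam hrep
        apply hcond
        intro y hy
        rw [hrep, Aux.dotp_sum_left]
        refine Finset.sum_eq_zero fun i _ => ?_
        rw [Aux.dotp_smul_left]
        by_cases hiI : i ∈ I
        · rw [hIperp i hiI y hy, mul_zero]
        · rw [hlamI i hiI, zero_mul]
    -- conclude
    rw [Set.mem_iUnion]
    refine ⟨⟨τ, hfaceτ⟩, ?_⟩
    exact ⟨vs, hvsP, (funext fun u' => (hval u').symm : iotaFace σ τ vs = φ.val)⟩
  · -- easy inclusion: each ι(π_τ(P)) is in the closure
    intro φ hφ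
    rw [Set.mem_iUnion] at hφ
    obtain ⟨⟨τ, hface⟩, hφτ⟩ := hφ
    obtain ⟨p, hpP, hpeq0⟩ := hφτ
    have hpeq : iotaFace σ τ p = φ.val := hpeq0
    obtain ⟨u₀, hu₀, hτeq⟩ := hface
    have hτσ : τ ⊆ σ := by rw [hτeq]; exact Set.inter_subset_left
    have h0τ : (0 : Fin n → ℝ) ∈ τ := by
      rw [hτeq]
      exact ⟨(hσiff 0).mpr (fun i => by rw [Aux.dotp_zero_right]), Aux.dotp_zero_right u₀⟩
    have hτadd : ∀ x ∈ τ, ∀ y ∈ τ, x + y ∈ τ := by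
      intro x hx y hy
      rw [hτeq] at hx hy ⊢
      refine ⟨(hσiff _).mpr (fun i => ?_), ?_⟩
      · rw [Aux.dotp_add_right]
        exact add_nonpos ((hσiff x).mp hx.1 i) ((hσiff y).mp hy.1 i)
      · show dotp u₀ (x + y) = 0
        rw [Aux.dotp_add_right, hx.2, hy.2, add_zero]
    obtain ⟨w, hwτ, hwiff, -⟩ := Aux.interior_rep u hσ hτσ h0τ hτadd
    have hwσ : w ∈ σ := hτσ hwτ
    have hfk : ∀ k : ℕ, p + (k : ℝ) • w ∈ P := by
      intro k
      rw [hPiff]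
      intro i
      rw [Aux.dotp_add_right, Aux.dotp_smul_right]
      have h1 : dotp (u i) p ≤ a i := (hPiff p).mp hpP i
      have h2 : dotp (u i) w ≤ 0 := (hσiff w).mp hwσ i
      nlinarith [Nat.cast_nonneg (α := ℝ) k]
    have htend : Filter.Tendsto
        (fun k : ℕ => (⟨jmap σ (p + (k : ℝ) • w), hjN _⟩ : ↥(NRc σ)))
        Filter.atTop (𝓝 φ) := by
      rw [tendsto_subtype_rng, tendsto_pi_nhds]
      intro u'
      have hvals : ∀ k : ℕ, jmap σ (p + (k : ℝ) • w) u' =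
          ((dotp u'.val p + (k : ℝ) * dotp u'.val w : ℝ) : EReal) := by
        intro k
        show ((dotp u'.val (p + (k : ℝ) • w) : ℝ) : EReal) = _
        rw [Aux.dotp_add_right, Aux.dotp_smul_right]
      by_cases hcond : ∀ y ∈ τ, dotp u'.val y = 0
      · have hw0 : dotp u'.val w = 0 := (hwiff u'.val u'.2).mp hcond
        have hφval : φ.val u' = ((dotp u'.val p : ℝ) : EReal) := by
          rw [← hpeq]
          show (if _ then _ else _) = _
          rw [if_pos hcond]
        rw [hφval]
        refine Filter.Tendsto.congr (fun k => ?_) tendsto_const_nhds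
        show ((dotp u'.val p : ℝ) : EReal) = jmap σ (p + (k : ℝ) • w) u'
        rw [hvals k, hw0, mul_zero, add_zero]
      · have hwlt : dotp u'.val w < 0 := by
          have hne : dotp u'.val w ≠ 0 := fun h =>
            hcond ((hwiff u'.val u'.2).mpr h)
          exact lt_of_le_of_ne (u'.2 w hwσ) hne
        have hφval : φ.val u' = ⊥ := by
          rw [← hpeq]
          show (if _ then _ else _) = _
          rw [if_neg hcond]
        rw [hφval]
        exact Filter.Tendsto.congr
          (f₁ := fun k : ℕ => ((dotp u'.val p + (k : ℝ) * dotp u'.val w : ℝ) : EReal))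
          (fun k => (hvals k).symm) (Aux.tendsto_coe_bot hwlt)
    exact mem_closure_of_tendsto htend
      (Filter.Eventually.of_forall (fun k => ⟨p + (k : ℝ) • w, hfk k, rfl⟩))
  · -- disjointness
    intro τ1 τ2 hne
    rw [Set.disjoint_left]
    rintro ψ ⟨p1, hp1, hψ1⟩ ⟨p2, hp2, hψ2⟩
    apply hne
    have hperp : ∀ x : ↥(polarCone σ),
        (∀ y ∈ τ1.val, dotp x.val y = 0) ↔ (∀ y ∈ τ2.val, dotp x.val y = 0) := by
      intro x
      have h12 : iotaFace σ τ1.val p1 x = iotaFace σ τ2.val p2 x := by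
        rw [hψ1, hψ2]
      constructor
      · intro h1
        by_contra h2
        rw [show iotaFace σ τ1.val p1 x = _ from if_pos h1,
          show iotaFace σ τ2.val p2 x = _ from if_neg h2] at h12
        exact EReal.coe_ne_bot _ h12
      · intro h2
        by_contra h1
        rw [show iotaFace σ τ1.val p1 x = _ from if_neg h1,
          show iotaFace σ τ2.val p2 x = _ from if_pos h2] at h12
        exact EReal.coe_ne_bot _ h12.symm
    have hchar : ∀ (τ : Set (Fin n → ℝ)), IsFace σ τ →
        τ = σ ∩ {v | ∀ x : ↥(polarCone σ),
          (∀ y ∈ τ, dotp x.val y = 0) → dotp x.val v = 0} := by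
      rintro τ ⟨u₀, hu₀, rfl⟩
      ext v
      constructor
      · intro hv
        exact ⟨hv.1, fun x hx => hx v hv⟩
      · rintro ⟨hvσ, hv⟩
        exact ⟨hvσ, hv ⟨u₀, hu₀⟩ (fun y hy => hy.2)⟩
    have hveq : τ1.val = τ2.val := by
      rw [hchar τ1.val τ1.2]
      conv_rhs => rw [hchar τ2.val τ2.2]
      ext v
      simp only [Set.mem_inter_iff, Set.mem_setOf_eq]
      constructor
      · rintro ⟨hvσ, hv⟩
        exact ⟨hvσ, fun x hx => hv x ((hperp x).mpr hx)⟩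
      · rintro ⟨hvσ, hv⟩
        exact ⟨hvσ, fun x hx => hv x ((hperp x).mp hx)⟩
    exact Subtype.ext hveq

end
end

section
/- Let P ⊆ ℝ^n be a nonempty pointed polyhedron and let u ∈ Recc(P)∨, i.e. ⟨u,w⟩ ≤ 0 for all w ∈ Recc(P). Then the set Vert(P) of vertices of P is finite and nonempty, the linear functional v ↦ ⟨u,v⟩ is bounded above on P, and sup_{v ∈ P} ⟨u,v⟩ = max_{v ∈ Vert(P)} ⟨u,v⟩. -/
open Topology

noncomputable section

/-- The set of vertices of `P`: points of `P` that are the unique maximizer on `P` of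
some linear functional (zero-dimensional faces). -/
def vertices {n : ℕ} (P : Set (Fin n → ℝ)) : Set (Fin n → ℝ) :=
  {x | x ∈ P ∧ ∃ c : Fin n → ℝ, ∀ y ∈ P, y ≠ x → dotp c y < dotp c x}


namespace Stmt8Aux


variable {n : ℕ}

lemma dotp_add_right (u x y : Fin n → ℝ) : dotp u (x + y) = dotp u x + dotp u y := by
  simp [dotp, mul_add, Finset.sum_add_distrib]

lemma dotp_smul_right (u : Fin n → ℝ) (t : ℝ) (x : Fin n → ℝ) :
    dotp u (t • x) = t * dotp u x := by
  simp [dotp, Finset.mul_sum, mul_comm, mul_assoc, mul_left_comm]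

lemma dotp_neg_right (u x : Fin n → ℝ) : dotp u (-x) = -dotp u x := by
  simp [dotp, Finset.sum_neg_distrib]

lemma dotp_sub_right (u x y : Fin n → ℝ) : dotp u (x - y) = dotp u x - dotp u y := by
  simp [dotp, mul_sub, Finset.sum_sub_distrib]

lemma dotp_add_left (x y d : Fin n → ℝ) : dotp (x + y) d = dotp x d + dotp y d := by
  simp [dotp, add_mul, Finset.sum_add_distrib]

lemma dotp_smul_left (t : ℝ) (x d : Fin n → ℝ) : dotp (t • x) d = t * dotp x d := by
  simp [dotp, Finset.mul_sum, mul_comm, mul_assoc, mul_left_comm]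

lemma dotp_zero_left (d : Fin n → ℝ) : dotp 0 d = 0 := by simp [dotp]

lemma dotp_self_eq_zero {w : Fin n → ℝ} (h : dotp w w = 0) : w = 0 := by
  have := (Finset.sum_eq_zero_iff_of_nonneg (fun i _ => mul_self_nonneg (w i))).1 h
  funext i
  exact mul_self_eq_zero.1 (this i (Finset.mem_univ i))

lemma sum_dotp {r : ℕ} (s : Finset (Fin r)) (f : Fin r → (Fin n → ℝ)) (x : Fin n → ℝ) :
    dotp (∑ i ∈ s, f i) x = ∑ i ∈ s, dotp (f i) x := by
  classical
  induction s using Finset.induction with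
  | empty => simp [dotp_zero_left]
  | insert _ _ h ih => simp [Finset.sum_insert h, dotp_add_left, ih]

lemma dotp_eq_zero_of_mem_span {S : Set (Fin n → ℝ)} {d : Fin n → ℝ}
    (hd : ∀ c ∈ S, dotp c d = 0) {c : Fin n → ℝ}
    (hc : c ∈ Submodule.span ℝ S) : dotp c d = 0 := by
  induction hc using Submodule.span_induction with
  | mem x hx => exact hd x hx
  | zero => exact dotp_zero_left d
  | add x y hx hy ihx ihy => rw [dotp_add_left, ihx, ihy, add_zero]
  | smul t x hx ihx => rw [dotp_smul_left, ihx, mul_zero]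

lemma eq_of_span_top {S : Set (Fin n → ℝ)} (hS : Submodule.span ℝ S = ⊤)
    {x y : Fin n → ℝ} (h : ∀ c ∈ S, dotp c x = dotp c y) : x = y := by
  have hd : ∀ c ∈ S, dotp c (y - x) = 0 := fun c hc => by
    rw [dotp_sub_right, h c hc, sub_self]
  have : dotp (y - x) (y - x) = 0 :=
    dotp_eq_zero_of_mem_span hd (by rw [hS]; trivial)
  have := dotp_self_eq_zero this
  have : y = x := by rwa [sub_eq_zero] at this
  exact this.symm

lemma dotp_inner (u v : EuclideanSpace ℝ (Fin n)) :
    (inner ℝ u v : ℝ) = dotp u v := by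
  simp [dotp, PiLp.inner_apply, RCLike.inner_apply, mul_comm]

lemma exists_perp (S : Set (Fin n → ℝ))
    (h : Submodule.span ℝ S ≠ ⊤) :
    ∃ d : Fin n → ℝ, d ≠ 0 ∧ ∀ c ∈ S, dotp c d = 0 := by
  let e := (WithLp.linearEquiv 2 ℝ (Fin n → ℝ)).symm
  let S' : Set (EuclideanSpace ℝ (Fin n)) := e '' S
  have h' : Submodule.span ℝ S' ≠ ⊤ := by
    intro htop; apply h
    rw [eq_top_iff]; intro x _
    have hle : Submodule.span ℝ S' ≤ (Submodule.span ℝ S).map (e : (Fin n → ℝ) →ₗ[ℝ] WithLp 2 (Fin n → ℝ)) :=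
      Submodule.span_le.2 (by rintro _ ⟨c, hc, rfl⟩; exact ⟨c, Submodule.subset_span hc, rfl⟩)
    have hx : e x ∈ (Submodule.span ℝ S).map (e : (Fin n → ℝ) →ₗ[ℝ] WithLp 2 (Fin n → ℝ)) := hle (by rw [htop]; trivial)
    obtain ⟨y, hy, hyx⟩ := hx
    rwa [e.injective hyx] at hy
  have hne : (Submodule.span ℝ S')ᗮ ≠ ⊥ := fun hb => h' (Submodule.orthogonal_eq_bot_iff.1 hb)
  obtain ⟨d, hd, hd0⟩ := Submodule.exists_mem_ne_zero_of_ne_bot hne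
  exact ⟨d.ofLp, fun h0 => hd0 (by ext i; simp [h0]), fun c hc => by
    have := (Submodule.mem_orthogonal _ d).1 hd (e c) (Submodule.subset_span ⟨c, hc, rfl⟩)
    rw [dotp_inner] at this
    exact this⟩

lemma exists_pos_eps {r : ℕ} (s g : Fin r → ℝ) (hs : ∀ i, 0 ≤ s i)
    (h : ∀ i, g i ≠ 0 → 0 < s i) :
    ∃ ε : ℝ, 0 < ε ∧ ∀ i, ε * |g i| ≤ s i := by
  classical
  set F := Finset.univ.filter (fun i => g i ≠ 0) with hF
  by_cases hne : F.Nonempty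
  · refine ⟨F.inf' hne (fun i => s i / |g i|), ?_, ?_⟩
    · refine (Finset.lt_inf'_iff hne).2 fun i hi => ?_
      have hgi : g i ≠ 0 := (Finset.mem_filter.1 hi).2
      exact div_pos (h i hgi) (abs_pos.2 hgi)
    · intro i
      by_cases hgi : g i ≠ 0
      · have hiF : i ∈ F := Finset.mem_filter.2 ⟨Finset.mem_univ i, hgi⟩
        have := Finset.inf'_le (fun i => s i / |g i|) hiF
        have hga : 0 < |g i| := abs_pos.2 hgi
        calc F.inf' hne (fun i => s i / |g i|) * |g i| ≤ (s i / |g i|) * |g i| := by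
              apply mul_le_mul_of_nonneg_right this hga.le
          _ = s i := div_mul_cancel₀ _ hga.ne'
      · push_neg at hgi
        simp [hgi, hs i]
  · refine ⟨1, one_pos, fun i => ?_⟩
    have : g i = 0 := by
      by_contra hgi
      exact hne ⟨i, Finset.mem_filter.2 ⟨Finset.mem_univ i, hgi⟩⟩
    simp [this, hs i]


variable {r : ℕ} (uu : Fin r → (Fin n → ℝ)) (a : Fin r → ℝ)

/-- Normals of the constraints active at `x`. -/
def Sact (x : Fin n → ℝ) : Set (Fin n → ℝ) := uu '' {i | dotp (uu i) x = a i}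

lemma vertex_of_span {x : Fin n → ℝ} (hx : ∀ i, dotp (uu i) x ≤ a i)
    (hsp : Submodule.span ℝ (Sact uu a x) = ⊤) :
    x ∈ vertices {v | ∀ i, dotp (uu i) v ≤ a i} := by
  classical
  set act : Finset (Fin r) := Finset.univ.filter (fun i => dotp (uu i) x = a i) with hact
  refine ⟨hx, ∑ i ∈ act, uu i, ?_⟩
  intro y hy hyx
  rw [sum_dotp, sum_dotp]
  have hle : ∀ i ∈ act, dotp (uu i) y ≤ dotp (uu i) x := fun i hi => by
    have h := (Finset.mem_filter.1 hi).2
    rw [h]; exact hy i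
  refine lt_of_le_of_ne (Finset.sum_le_sum hle) fun heq => ?_
  have hterm := (Finset.sum_eq_sum_iff_of_le hle).1 heq
  apply hyx
  apply eq_of_span_top hsp
  rintro c ⟨i, hi, rfl⟩
  exact hterm i (Finset.mem_filter.2 ⟨Finset.mem_univ i, hi⟩)

lemma span_of_vertex {x : Fin n → ℝ}
    (hx : x ∈ vertices {v | ∀ i, dotp (uu i) v ≤ a i}) :
    Submodule.span ℝ (Sact uu a x) = ⊤ := by
  by_contra hsp
  obtain ⟨hxP, c, hc⟩ := hx
  obtain ⟨d, hd0, hdS⟩ := exists_perp _ hsp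
  have hdact : ∀ i, dotp (uu i) x = a i → dotp (uu i) d = 0 := fun i hi =>
    hdS _ ⟨i, hi, rfl⟩
  obtain ⟨ε, hε, heps⟩ := exists_pos_eps (fun i => a i - dotp (uu i) x)
      (fun i => dotp (uu i) d) (fun i => sub_nonneg.2 (hxP i)) (by
        intro i hgi
        show 0 < a i - dotp (uu i) x
        rcases lt_or_eq_of_le (hxP i) with h | h
        · linarith
        · exact absurd (hdact i h) hgi)
  have hmem : ∀ s : ℝ, |s| ≤ ε → x + s • d ∈ {v | ∀ i, dotp (uu i) v ≤ a i} := by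
    intro s hs i
    rw [Set.mem_setOf_eq] at hxP
    show dotp (uu i) (x + s • d) ≤ a i
    rw [dotp_add_right, dotp_smul_right]
    have h1 : s * dotp (uu i) d ≤ |s| * |dotp (uu i) d| := by
      calc s * dotp (uu i) d ≤ |s * dotp (uu i) d| := le_abs_self _
        _ = |s| * |dotp (uu i) d| := abs_mul _ _
    have h2 : |s| * |dotp (uu i) d| ≤ ε * |dotp (uu i) d| :=
      mul_le_mul_of_nonneg_right hs (abs_nonneg _)
    have h3 := heps i
    have h4 := hxP i
    linarith
  have hne : ∀ s : ℝ, s ≠ 0 → x + s • d ≠ x := by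
    intro s hs h
    apply hd0
    have hsd : s • d = 0 := by
      have := congrArg (fun z => z - x) h; simpa using this
    rcases smul_eq_zero.1 hsd with h' | h'
    · exact absurd h' hs
    · exact h'
  have h1 := hc _ (hmem ε (le_of_eq (abs_of_pos hε))) (hne ε hε.ne')
  have h2 := hc _ (hmem (-ε) (by rw [abs_neg]; exact le_of_eq (abs_of_pos hε)))
      (hne (-ε) (neg_ne_zero.2 hε.ne'))
  rw [dotp_add_right, dotp_smul_right] at h1 h2
  nlinarith

lemma vertices_finite : (vertices {v | ∀ i, dotp (uu i) v ≤ a i}).Finite := by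
  classical
  have hinj : Set.InjOn (fun x => Finset.univ.filter (fun i => dotp (uu i) x = a i))
      (vertices {v | ∀ i, dotp (uu i) v ≤ a i}) := by
    intro x hx y hy hxy
    apply eq_of_span_top (span_of_vertex uu a hx)
    rintro c ⟨i, hi, rfl⟩
    have hiy : dotp (uu i) y = a i := by
      have hxy' : Finset.univ.filter (fun i => dotp (uu i) x = a i) =
          Finset.univ.filter (fun i => dotp (uu i) y = a i) := hxy
      have hmem : i ∈ Finset.univ.filter (fun i => dotp (uu i) y = a i) := by
        rw [← hxy']; exact Finset.mem_filter.2 ⟨Finset.mem_univ i, hi⟩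
      exact (Finset.mem_filter.1 hmem).2
    rw [hi, hiy]
  exact Set.Finite.of_finite_image (Set.toFinite _) hinj

lemma descent (σ : Set (Fin n → ℝ))
    (hσ : σ = {v | ∀ i, dotp (uu i) v ≤ 0})
    (hpt : IsPointed σ)
    (u : Fin n → ℝ) (hu : ∀ v ∈ σ, dotp u v ≤ 0) :
    ∀ (k : ℕ) (x : Fin n → ℝ), (∀ i, dotp (uu i) x ≤ a i) →
      n ≤ k + Module.finrank ℝ (Submodule.span ℝ (Sact uu a x)) →
      ∃ z ∈ vertices {v | ∀ i, dotp (uu i) v ≤ a i}, dotp u x ≤ dotp u z := by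
  intro k
  induction k with
  | zero =>
    intro x hx hrk
    have hsp : Submodule.span ℝ (Sact uu a x) = ⊤ := by
      by_contra hsp
      have h1 : Module.finrank ℝ (Submodule.span ℝ (Sact uu a x)) <
          Module.finrank ℝ (Fin n → ℝ) :=
        Submodule.finrank_lt hsp
      rw [Module.finrank_fin_fun] at h1
      omega
    exact ⟨x, vertex_of_span uu a hx hsp, le_refl _⟩
  | succ k ih =>
    intro x hx hrk
    by_cases hsp : Submodule.span ℝ (Sact uu a x) = ⊤
    · exact ⟨x, vertex_of_span uu a hx hsp, le_refl _⟩
    obtain ⟨d, hd0, hdS⟩ := exists_perp _ hsp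
    have hdact : ∀ i, dotp (uu i) x = a i → dotp (uu i) d = 0 := fun i hi =>
      hdS _ ⟨i, hi, rfl⟩
    have hnotboth : ¬ (d ∈ σ ∧ -d ∈ σ) := by
      rintro ⟨h1, h2⟩
      rw [hσ] at h1 h2
      have hz : ∀ i, dotp (uu i) d = 0 := fun i => le_antisymm (h1 i) (by
        have h3 := h2 i; rw [dotp_neg_right] at h3; linarith)
      have hsub : (Submodule.span ℝ {d} : Set (Fin n → ℝ)) ⊆ σ := by
        intro w hw
        obtain ⟨t, rfl⟩ := Submodule.mem_span_singleton.1 hw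
        rw [hσ]
        intro i
        show dotp (uu i) (t • d) ≤ 0
        rw [dotp_smul_right, hz i, mul_zero]
      have hbot := hpt _ hsub
      exact hd0 (Submodule.span_singleton_eq_bot.1 hbot)
    have hmemσ : ∀ w : Fin n → ℝ, w ∈ σ ↔ ∀ i, dotp (uu i) w ≤ 0 := fun w => by
      rw [hσ]; rfl
    have hchoice : ∃ e : Fin n → ℝ, (∀ i, dotp (uu i) x = a i → dotp (uu i) e = 0) ∧
        0 ≤ dotp u e ∧ ∃ i, 0 < dotp (uu i) e := by
      by_cases hdσ : d ∈ σ
      · have hnd : -d ∉ σ := fun h => hnotboth ⟨hdσ, h⟩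
        refine ⟨-d, fun i hi => by rw [dotp_neg_right, hdact i hi, neg_zero], ?_, ?_⟩
        · rw [dotp_neg_right]; linarith [hu d hdσ]
        · rw [hmemσ] at hnd; push_neg at hnd
          obtain ⟨i, hi⟩ := hnd; exact ⟨i, hi⟩
      · by_cases hud : 0 ≤ dotp u d
        · refine ⟨d, hdact, hud, ?_⟩
          rw [hmemσ] at hdσ; push_neg at hdσ
          obtain ⟨i, hi⟩ := hdσ; exact ⟨i, hi⟩
        · have hnd : -d ∉ σ := fun h => by
            have h5 := hu _ h; rw [dotp_neg_right] at h5; linarith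
          refine ⟨-d, fun i hi => by rw [dotp_neg_right, hdact i hi, neg_zero], ?_, ?_⟩
          · rw [dotp_neg_right]; linarith
          · rw [hmemσ] at hnd; push_neg at hnd
            obtain ⟨i, hi⟩ := hnd; exact ⟨i, hi⟩
    obtain ⟨e, he0, heu, i0, hi0⟩ := hchoice
    classical
    set T : Finset (Fin r) := Finset.univ.filter (fun i => 0 < dotp (uu i) e) with hT
    have hTne : T.Nonempty := ⟨i0, Finset.mem_filter.2 ⟨Finset.mem_univ _, hi0⟩⟩
    set f : Fin r → ℝ := fun i => (a i - dotp (uu i) x) / dotp (uu i) e with hf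
    set t := T.inf' hTne f with ht
    have ht0 : 0 ≤ t := by
      refine Finset.le_inf' hTne f fun i hi => ?_
      have hgi : 0 < dotp (uu i) e := (Finset.mem_filter.1 hi).2
      exact div_nonneg (sub_nonneg.2 (hx i)) hgi.le
    have hx'P : ∀ i, dotp (uu i) (x + t • e) ≤ a i := by
      intro i
      rw [dotp_add_right, dotp_smul_right]
      by_cases hgi : 0 < dotp (uu i) e
      · have hiT : i ∈ T := Finset.mem_filter.2 ⟨Finset.mem_univ _, hgi⟩
        have hle := Finset.inf'_le f hiT
        rw [← ht, hf] at hle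
        have h2 : t * dotp (uu i) e ≤ a i - dotp (uu i) x := (le_div_iff₀ hgi).1 hle
        linarith
      · push_neg at hgi
        have h2 : t * dotp (uu i) e ≤ 0 := mul_nonpos_of_nonneg_of_nonpos ht0 hgi
        linarith [hx i]
    obtain ⟨i1, hi1T, hi1⟩ := Finset.exists_mem_eq_inf' hTne f
    have hg1 : 0 < dotp (uu i1) e := (Finset.mem_filter.1 hi1T).2
    have hact1 : dotp (uu i1) (x + t • e) = a i1 := by
      rw [dotp_add_right, dotp_smul_right, ht, hi1, hf]
      rw [div_mul_cancel₀ _ hg1.ne']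
      ring
    have hSsub : Sact uu a x ⊆ Sact uu a (x + t • e) := by
      rintro c ⟨i, hi, rfl⟩
      refine ⟨i, ?_, rfl⟩
      show dotp (uu i) (x + t • e) = a i
      rw [dotp_add_right, dotp_smul_right, he0 i hi, mul_zero, add_zero]
      exact hi
    have hnotmem : uu i1 ∉ Submodule.span ℝ (Sact uu a x) := by
      intro hmem
      have hz := dotp_eq_zero_of_mem_span (d := e) (fun c hc => by
        rcases hc with ⟨i, hi, rfl⟩; exact he0 i hi) hmem
      linarith
    have hlt : Submodule.span ℝ (Sact uu a x) < Submodule.span ℝ (Sact uu a (x + t • e)) := by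
      refine lt_of_le_of_ne (Submodule.span_mono hSsub) fun heq => ?_
      exact hnotmem (heq ▸ Submodule.subset_span ⟨i1, hact1, rfl⟩)
    have hrk' : n ≤ k + Module.finrank ℝ (Submodule.span ℝ (Sact uu a (x + t • e))) := by
      have hfr := Submodule.finrank_lt_finrank_of_lt hlt
      omega
    obtain ⟨z, hz, hz'⟩ := ih (x + t • e) hx'P hrk'
    refine ⟨z, hz, ?_⟩
    have hstep : dotp u x ≤ dotp u (x + t • e) := by
      rw [dotp_add_right, dotp_smul_right]
      nlinarith [mul_nonneg ht0 heu]
    linarith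

end Stmt8Aux

/-- Let `P ⊆ ℝⁿ` be a nonempty pointed polyhedron and let
`u ∈ Recc(P)∨`.  Then `Vert(P)` is finite and nonempty, the linear functional
`v ↦ ⟨u,v⟩` is bounded above on `P`, and its supremum over `P` equals its maximum over
`Vert(P)` (in particular the supremum is attained at a vertex). -/
theorem stmt8 {n r : ℕ} (uu : Fin r → (Fin n → ℝ)) (a : Fin r → ℝ)
    (P σ : Set (Fin n → ℝ))
    (hP : P = {v | ∀ i, dotp (uu i) v ≤ a i})
    (hσ : σ = {v | ∀ i, dotp (uu i) v ≤ 0})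
    (hpt : IsPointed σ) (hPne : P.Nonempty)
    (u : Fin n → ℝ) (hu : u ∈ polarCone σ) :
    (vertices P).Finite ∧ (vertices P).Nonempty ∧
      BddAbove ((fun v => dotp u v) '' P) ∧
      ∃ x ∈ vertices P, (∀ v ∈ P, dotp u v ≤ dotp u x) ∧
        sSup ((fun v => dotp u v) '' P) = dotp u x := by
  subst hP
  have hu' : ∀ v ∈ σ, dotp u v ≤ 0 := hu
  have hdesc : ∀ x ∈ {v | ∀ i, dotp (uu i) v ≤ a i},
      ∃ z ∈ vertices {v | ∀ i, dotp (uu i) v ≤ a i}, dotp u x ≤ dotp u z := by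
    intro x hx
    exact Stmt8Aux.descent uu a σ hσ hpt u hu' n x hx (Nat.le_add_right _ _)
  have hfin := Stmt8Aux.vertices_finite uu a
  obtain ⟨x0, hx0⟩ := hPne
  obtain ⟨z0, hz0, -⟩ := hdesc x0 hx0
  have hvne : (vertices {v | ∀ i, dotp (uu i) v ≤ a i}).Nonempty := ⟨z0, hz0⟩
  obtain ⟨x, hxv, hxmax⟩ := Set.exists_max_image _ (fun v => dotp u v) hfin hvne
  have hbound : ∀ v ∈ {v | ∀ i, dotp (uu i) v ≤ a i}, dotp u v ≤ dotp u x := by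
    intro v hv
    obtain ⟨z, hzv, hvz⟩ := hdesc v hv
    exact hvz.trans (hxmax z hzv)
  have hbdd : BddAbove ((fun v => dotp u v) '' {v | ∀ i, dotp (uu i) v ≤ a i}) := by
    refine ⟨dotp u x, ?_⟩
    rintro w ⟨v, hv, rfl⟩
    exact hbound v hv
  refine ⟨hfin, hvne, hbdd, x, hxv, hbound, ?_⟩
  have hxP : x ∈ {v | ∀ i, dotp (uu i) v ≤ a i} := hxv.1
  apply le_antisymm
  · exact csSup_le ⟨dotp u x, ⟨x, hxP, rfl⟩⟩ (by rintro w ⟨v, hv, rfl⟩; exact hbound v hv)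
  · exact le_csSup hbdd ⟨x, hxP, rfl⟩

end
end
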